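/- arXiv:1707.06840 — 4 statements merged into one kernel-verified Lean document; each statement's English description precedes it below -/
import Mathlib

section
/- Let n ≥ 1 and let W = S_{n+1} be the Weyl group of type A_n. Suppose w_1, …, w_k ∈ W are such that the positive roots Δ⁺ are the disjoint union Δ⁺ = Φ_{w_1} ⊔ Φ_{w_2} ⊔ ⋯ ⊔ Φ_{w_k} of their inversion sets. If u ∈ W satisfies w_i ≤ w_i u in the Bruhat order for every i = 1, …, k, then u = e (the identity). -/
open RealInnerProductSpace

noncomputable section

variable {V : Type*} [NormedAddCommGroup V] [InnerProductSpace ℝ V] [FiniteDimensional ℝ V]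

/-- Orthogonal reflection of `V` in the hyperplane orthogonal to `α`. -/
def reflRoot (α : V) : V ≃ₗᵢ[ℝ] V := Submodule.reflection (ℝ ∙ α)ᗮ

/-- The inversion set `Φ_w = w⁻¹Δ⁻ ∩ Δ⁺ = {α ∈ Δ⁺ | w α ∈ Δ⁻}`, where `Δ⁻ = -Δ⁺`
(so `w α ∈ Δ⁻ ↔ -(w α) ∈ Δ⁺`). -/
def invSet (pos : Set V) (w : V ≃ₗᵢ[ℝ] V) : Set V := {α | α ∈ pos ∧ -(w α) ∈ pos}

/-- The length of `w`, i.e. the number of inversions of `w`. -/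
def invLen (pos : Set V) (w : V ≃ₗᵢ[ℝ] V) : ℕ := (invSet pos w).ncard

/-- The Bruhat order on the Weyl group: the reflexive-transitive closure of the relation
`x ⋖ x * s_α` (right multiplication by the reflection in a root `α`) whenever the length
(= number of inversions) increases. -/
def bruhatLE (roots pos : Set V) : (V ≃ₗᵢ[ℝ] V) → (V ≃ₗᵢ[ℝ] V) → Prop :=
  Relation.ReflTransGen
    (fun x y => (∃ α ∈ roots, y = x * reflRoot α) ∧ invLen pos x < invLen pos y)

/-- The standard basis vector `ε_p` of `ℝ^m`. -/
def eps (m : ℕ) (p : Fin m) : EuclideanSpace ℝ (Fin m) := EuclideanSpace.single p (1 : ℝ)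

/-- `ρ`, one half the sum of the positive roots. -/
def rho (pos : Set V) : V := (2⁻¹ : ℝ) • ∑ᶠ α ∈ pos, α

/-- The positive roots of type `A_n`: `ε_p - ε_q` for `p < q`. -/
def posA (n : ℕ) : Set (EuclideanSpace ℝ (Fin (n + 1))) :=
  {v | ∃ p q : Fin (n + 1), p < q ∧ v = eps (n + 1) p - eps (n + 1) q}

/-- The roots of type `A_n`: `ε_p - ε_q` for `p ≠ q`. -/
def rootsA (n : ℕ) : Set (EuclideanSpace ℝ (Fin (n + 1))) :=
  {v | ∃ p q : Fin (n + 1), p ≠ q ∧ v = eps (n + 1) p - eps (n + 1) q}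

/-- The Weyl group `W = S_{n+1}` of type `A_n`, realized as the set of isometries of
`ℝ^{n+1}` permuting the standard basis vectors `ε_1, …, ε_{n+1}`. -/
def WA (n : ℕ) : Set (EuclideanSpace ℝ (Fin (n + 1)) ≃ₗᵢ[ℝ] EuclideanSpace ℝ (Fin (n + 1))) :=
  {g | ∃ σ : Equiv.Perm (Fin (n + 1)), ∀ p, g (eps (n + 1) p) = eps (n + 1) (σ p)}

/-! ### Auxiliary material for the proof of `statement0`. -/

namespace S0

variable {m : ℕ}

lemma eps_apply (p j : Fin m) : eps m p j = if j = p then 1 else 0 :=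
  EuclideanSpace.single_apply p 1 j

lemma inner_eps (a b : Fin m) : (inner ℝ (eps m a) (eps m b) : ℝ) = if a = b then 1 else 0 := by
  simp [eps, EuclideanSpace.inner_single_left, EuclideanSpace.single_apply, eq_comm]

lemma eps_sub_apply (p q j : Fin m) :
    (eps m p - eps m q) j = (if j = p then (1:ℝ) else 0) - (if j = q then 1 else 0) := by
  rw [PiLp.sub_apply, eps_apply, eps_apply]

lemma eps_sub_inj {a b c d : Fin m} (hab : a ≠ b) (hcd : c ≠ d)
    (h : eps m a - eps m b = eps m c - eps m d) : a = c ∧ b = d := by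
  have ha := congrArg (fun v : EuclideanSpace ℝ (Fin m) => v a) h
  have hb := congrArg (fun v : EuclideanSpace ℝ (Fin m) => v b) h
  simp only [eps_sub_apply] at ha hb
  have ha' : (1:ℝ) = (if a = c then 1 else 0) - if a = d then 1 else 0 := by
    simpa [hab] using ha
  have hb' : (-1:ℝ) = (if b = c then 1 else 0) - if b = d then 1 else 0 := by
    simpa [Ne.symm hab] using hb
  constructor
  · split_ifs at ha' <;> norm_num at ha' <;> assumption
  · split_ifs at hb' <;> norm_num at hb' <;> assumption

lemma eps_inj {p q : Fin m} (h : eps m p = eps m q) : p = q := by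
  by_contra hne
  have := congrArg (fun v : EuclideanSpace ℝ (Fin m) => v p) h
  simp [eps_apply, hne] at this

lemma reflRoot_eps {p q : Fin m} (hpq : p ≠ q) (j : Fin m) :
    reflRoot (eps m p - eps m q) (eps m j) = eps m (Equiv.swap p q j) := by
  set α := eps m p - eps m q with hα
  have hfix : ∀ v : EuclideanSpace ℝ (Fin m), (inner ℝ α v : ℝ) = 0 → reflRoot α v = v := by
    intro v hv
    exact Submodule.reflection_mem_subspace_eq_self
      (Submodule.mem_orthogonal_singleton_iff_inner_right.mpr hv)
  have hneg : reflRoot α α = -α := Submodule.reflection_orthogonalComplement_singleton_eq_neg α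
  have hsum : reflRoot α (eps m p + eps m q) = eps m p + eps m q := by
    apply hfix
    rw [hα, inner_sub_left, inner_add_right, inner_add_right, inner_eps, inner_eps,
      inner_eps, inner_eps]
    simp [hpq, Ne.symm hpq]
  rcases eq_or_ne j p with rfl | hjp
  · rw [Equiv.swap_apply_left]
    have hdecomp : eps m j = (2⁻¹ : ℝ) • (eps m j + eps m q) + (2⁻¹ : ℝ) • α := by
      rw [hα]; module
    rw [hdecomp, map_add, map_smul, map_smul, hsum, hneg, hα]
    module
  rcases eq_or_ne j q with rfl | hjq
  · rw [Equiv.swap_apply_right]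
    have hdecomp : eps m j = (2⁻¹ : ℝ) • (eps m p + eps m j) - (2⁻¹ : ℝ) • α := by
      rw [hα]; module
    rw [hdecomp, map_sub, map_smul, map_smul, hsum, hneg, hα]
    module
  · rw [Equiv.swap_apply_of_ne_of_ne hjp hjq]
    apply hfix
    rw [hα, inner_sub_left, inner_eps, inner_eps]
    simp [Ne.symm hjp, Ne.symm hjq]

lemma eq_one_of_eps_fixed {u : EuclideanSpace ℝ (Fin m) ≃ₗᵢ[ℝ] EuclideanSpace ℝ (Fin m)}
    (h : ∀ p, u (eps m p) = eps m p) : u = 1 := by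
  simp only [eps] at h
  ext v
  have hv := (EuclideanSpace.basisFun (Fin m) ℝ).sum_repr v
  rw [← hv, map_sum]
  simp only [EuclideanSpace.basisFun_repr, EuclideanSpace.basisFun_apply]
  simp only [map_smul, h, LinearIsometryEquiv.coe_one, id]

/-! #### Inversion counting for permutations -/

def pairs (σ : Equiv.Perm (Fin m)) : Finset (Fin m × Fin m) :=
  Finset.univ.filter (fun x => x.1 < x.2 ∧ σ x.2 < σ x.1)

lemma mem_pairs {σ : Equiv.Perm (Fin m)} {x : Fin m × Fin m} :
    x ∈ pairs σ ↔ x.1 < x.2 ∧ σ x.2 < σ x.1 := by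
  simp [pairs]

/-- The folding map used to compare inversions of `σ * swap p q` with those of `σ`. -/
def fmap (p q : Fin m) (x : Fin m × Fin m) : Fin m × Fin m :=
  if x.1 < p ∧ (x.2 = p ∨ x.2 = q) then (x.1, Equiv.swap p q x.2)
  else if q < x.2 ∧ (x.1 = p ∨ x.1 = q) then (Equiv.swap p q x.1, x.2)
  else x

lemma fmap_invol {p q : Fin m} (hpq : p < q) (x : Fin m × Fin m) :
    fmap p q (fmap p q x) = x := by
  unfold fmap
  by_cases h1 : x.1 < p ∧ (x.2 = p ∨ x.2 = q)
  · rw [if_pos h1]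
    have h2 : Equiv.swap p q x.2 = p ∨ Equiv.swap p q x.2 = q := by
      rcases h1.2 with h | h <;> rw [h]
      · rw [Equiv.swap_apply_left]; exact Or.inr rfl
      · rw [Equiv.swap_apply_right]; exact Or.inl rfl
    rw [if_pos ⟨h1.1, h2⟩]
    simp [Equiv.swap_apply_self]
  · rw [if_neg h1]
    by_cases h2 : q < x.2 ∧ (x.1 = p ∨ x.1 = q)
    · rw [if_pos h2]
      have hx2 : ¬(x.2 = p ∨ x.2 = q) := by
        rintro (h | h) <;> rw [h] at h2
        · exact absurd (hpq.trans h2.1) (lt_irrefl _)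
        · exact absurd h2.1 (lt_irrefl _)
      rw [if_neg (by rintro ⟨-, h⟩; exact hx2 h)]
      have h3 : Equiv.swap p q x.1 = p ∨ Equiv.swap p q x.1 = q := by
        rcases h2.2 with h | h <;> rw [h]
        · rw [Equiv.swap_apply_left]; exact Or.inr rfl
        · rw [Equiv.swap_apply_right]; exact Or.inl rfl
      rw [if_pos ⟨h2.1, h3⟩]
      simp [Equiv.swap_apply_self]
    · rw [if_neg h2, if_neg h1, if_neg h2]

lemma fmap_mem {σ : Equiv.Perm (Fin m)} {p q : Fin m} (hpq : p < q) (hσ : σ q < σ p)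
    {x : Fin m × Fin m} (hx : x ∈ pairs (σ * Equiv.swap p q)) : fmap p q x ∈ pairs σ := by
  obtain ⟨a, b⟩ := x
  rw [mem_pairs] at hx
  obtain ⟨hab, hinv⟩ := hx
  simp only [Equiv.Perm.mul_apply] at hinv
  unfold fmap
  simp only
  by_cases h1 : a < p ∧ (b = p ∨ b = q)
  · rw [if_pos h1]
    have ha : Equiv.swap p q a = a := Equiv.swap_apply_of_ne_of_ne (ne_of_lt h1.1)
      (ne_of_lt (h1.1.trans hpq))
    rcases h1.2 with hb | hb
    · rw [hb, Equiv.swap_apply_left, mem_pairs]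
      rw [hb, ha, Equiv.swap_apply_left] at hinv
      exact ⟨h1.1.trans hpq, hinv⟩
    · rw [hb, Equiv.swap_apply_right, mem_pairs]
      rw [hb, ha, Equiv.swap_apply_right] at hinv
      exact ⟨h1.1, hinv⟩
  · rw [if_neg h1]
    by_cases h2 : q < b ∧ (a = p ∨ a = q)
    · rw [if_pos h2]
      have hb : Equiv.swap p q b = b := Equiv.swap_apply_of_ne_of_ne
        (ne_of_gt (hpq.trans h2.1)) (ne_of_gt h2.1)
      rcases h2.2 with ha' | ha'
      · rw [ha', Equiv.swap_apply_left, mem_pairs]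
        rw [ha', hb, Equiv.swap_apply_left] at hinv
        exact ⟨h2.1, hinv⟩
      · rw [ha', Equiv.swap_apply_right, mem_pairs]
        rw [ha', hb, Equiv.swap_apply_right] at hinv
        exact ⟨hpq.trans h2.1, hinv⟩
    · rw [if_neg h2, mem_pairs]
      refine ⟨hab, ?_⟩
      rcases eq_or_ne b p with hbp | hbp
      · exact absurd ⟨hbp ▸ hab, Or.inl hbp⟩ h1
      rcases eq_or_ne a q with haq | haq
      · exact absurd ⟨haq ▸ hab, Or.inr haq⟩ h2
      rcases eq_or_ne b q with hbq | hbq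
      · have hap : a ≠ p := by
          intro h'
          rw [hbq, h', Equiv.swap_apply_right, Equiv.swap_apply_left] at hinv
          exact absurd (hσ.trans hinv) (lt_irrefl _)
        have ha : Equiv.swap p q a = a := Equiv.swap_apply_of_ne_of_ne hap haq
        rw [hbq, ha, Equiv.swap_apply_right] at hinv
        rw [hbq]
        exact hσ.trans hinv
      rcases eq_or_ne a p with hap | hap
      · have hb : Equiv.swap p q b = b := Equiv.swap_apply_of_ne_of_ne hbp hbq
        rw [hap, hb, Equiv.swap_apply_left] at hinv
        rw [hap]
        exact hinv.trans hσ
      · have ha : Equiv.swap p q a = a := Equiv.swap_apply_of_ne_of_ne hap haq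
        have hb : Equiv.swap p q b = b := Equiv.swap_apply_of_ne_of_ne hbp hbq
        rw [ha, hb] at hinv
        exact hinv

lemma pairs_swap_card_le {σ : Equiv.Perm (Fin m)} {p q : Fin m} (hpq : p < q)
    (hσ : σ q < σ p) : (pairs (σ * Equiv.swap p q)).card ≤ (pairs σ).card := by
  apply Finset.card_le_card_of_injOn (fmap p q) (fun x hx => fmap_mem hpq hσ hx)
  intro x _ y _ hxy
  have := congrArg (fmap p q) hxy
  rwa [fmap_invol hpq, fmap_invol hpq] at this

/-! #### Prefix counting -/

def cnt (σ : Equiv.Perm (Fin m)) (t r : Fin m) : Finset (Fin m) :=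
  Finset.univ.filter (fun i => i ≤ t ∧ σ i ≤ r)

lemma mem_cnt {σ : Equiv.Perm (Fin m)} {t r i : Fin m} :
    i ∈ cnt σ t r ↔ i ≤ t ∧ σ i ≤ r := by
  simp [cnt]

lemma cnt_step {σ : Equiv.Perm (Fin m)} {p q : Fin m} (hpq : p < q) (hσ : σ p < σ q)
    (t r : Fin m) : (cnt (σ * Equiv.swap p q) t r).card ≤ (cnt σ t r).card := by
  classical
  apply Finset.card_le_card_of_injOn (fun i => if i = p ∧ t < q then i else Equiv.swap p q i)
  · intro i hi
    rw [Finset.mem_coe, mem_cnt] at hi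
    obtain ⟨hit, hir⟩ := hi
    rw [Equiv.Perm.mul_apply] at hir
    by_cases h : i = p ∧ t < q
    · beta_reduce
      rw [if_pos h, Finset.mem_coe, mem_cnt]
      rw [h.1, Equiv.swap_apply_left] at hir
      exact ⟨hit, le_of_lt (lt_of_lt_of_le (h.1 ▸ hσ) hir)⟩
    · beta_reduce
      rw [if_neg h, Finset.mem_coe, mem_cnt]
      rcases eq_or_ne i p with hip | hip
      · have hqt : q ≤ t := by
          rcases not_and_or.mp h with h' | h'
          · exact absurd hip h'
          · exact not_lt.mp h'
        rw [hip, Equiv.swap_apply_left]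
        rw [hip, Equiv.swap_apply_left] at hir
        exact ⟨hqt, hir⟩
      rcases eq_or_ne i q with hiq | hiq
      · rw [hiq, Equiv.swap_apply_right]
        rw [hiq, Equiv.swap_apply_right] at hir
        exact ⟨le_of_lt (lt_of_lt_of_le hpq (hiq ▸ hit)), hir⟩
      · rw [Equiv.swap_apply_of_ne_of_ne hip hiq]
        rw [Equiv.swap_apply_of_ne_of_ne hip hiq] at hir
        exact ⟨hit, hir⟩
  · intro x hx y hy hxy
    rw [Finset.mem_coe, mem_cnt] at hx hy
    simp only at hxy
    by_cases h1 : x = p ∧ t < q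
    · rw [if_pos h1] at hxy
      by_cases h2 : y = p ∧ t < q
      · rw [if_pos h2] at hxy; rw [h1.1, h2.1]
      · rw [if_neg h2] at hxy
        -- swap p q y = x = p, so y = q, but then y ≤ t < q, contradiction
        have : y = q := by
          have := congrArg (Equiv.swap p q) hxy.symm
          rwa [Equiv.swap_apply_self, h1.1, Equiv.swap_apply_left] at this
        exact absurd (this ▸ hy.1) (not_le.mpr h1.2)
    · rw [if_neg h1] at hxy
      by_cases h2 : y = p ∧ t < q
      · rw [if_pos h2] at hxy
        have : x = q := by
          have := congrArg (Equiv.swap p q) hxy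
          rwa [Equiv.swap_apply_self, h2.1, Equiv.swap_apply_left] at this
        exact absurd (this ▸ hx.1) (not_le.mpr h2.2)
      · rw [if_neg h2] at hxy
        exact (Equiv.swap p q).injective hxy

end S0

section S0Main

open S0

variable {n : ℕ}

lemma S0.invSet_eq {g : EuclideanSpace ℝ (Fin (n+1)) ≃ₗᵢ[ℝ] EuclideanSpace ℝ (Fin (n+1))}
    {σ : Equiv.Perm (Fin (n+1))} (hg : ∀ p, g (eps (n+1) p) = eps (n+1) (σ p)) :
    invSet (posA n) g
      = (fun x : Fin (n+1) × Fin (n+1) => eps (n+1) x.1 - eps (n+1) x.2) '' ↑(pairs σ) := by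
  ext v
  constructor
  · rintro ⟨⟨p, q, hpq, rfl⟩, hneg⟩
    have hg2 : g (eps (n+1) p - eps (n+1) q) = eps (n+1) (σ p) - eps (n+1) (σ q) := by
      rw [map_sub, hg, hg]
    rw [hg2, neg_sub] at hneg
    obtain ⟨p', q', hpq', heq⟩ := hneg
    have hqp : σ q ≠ σ p := fun h => (ne_of_lt hpq) (σ.injective h).symm
    obtain ⟨h1, h2⟩ := eps_sub_inj hqp (ne_of_lt hpq') heq
    refine ⟨(p, q), ?_, rfl⟩
    rw [Finset.mem_coe, mem_pairs]
    exact ⟨hpq, by rw [h1, h2]; exact hpq'⟩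
  · rintro ⟨⟨p, q⟩, hx, rfl⟩
    rw [Finset.mem_coe, mem_pairs] at hx
    refine ⟨⟨p, q, hx.1, rfl⟩, ?_⟩
    have hg2 : g (eps (n+1) p - eps (n+1) q) = eps (n+1) (σ p) - eps (n+1) (σ q) := by
      rw [map_sub, hg, hg]
    rw [hg2, neg_sub]
    exact ⟨σ q, σ p, hx.2, rfl⟩

lemma S0.invLen_eq {g : EuclideanSpace ℝ (Fin (n+1)) ≃ₗᵢ[ℝ] EuclideanSpace ℝ (Fin (n+1))}
    {σ : Equiv.Perm (Fin (n+1))} (hg : ∀ p, g (eps (n+1) p) = eps (n+1) (σ p)) :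
    invLen (posA n) g = (pairs σ).card := by
  have hinj : Set.InjOn (fun x : Fin (n+1) × Fin (n+1) => eps (n+1) x.1 - eps (n+1) x.2)
      ↑(pairs σ) := by
    intro x hx y hy hxy
    rw [Finset.mem_coe, mem_pairs] at hx hy
    obtain ⟨h1, h2⟩ := eps_sub_inj (ne_of_lt hx.1) (ne_of_lt hy.1) hxy
    exact Prod.ext h1 h2
  rw [invLen, invSet_eq hg, Set.ncard_image_of_injOn hinj, Set.ncard_coe_finset]

lemma S0.step_aux {b : EuclideanSpace ℝ (Fin (n+1)) ≃ₗᵢ[ℝ] EuclideanSpace ℝ (Fin (n+1))}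
    {π : Equiv.Perm (Fin (n+1))} (hπ : ∀ p, b (eps (n+1) p) = eps (n+1) (π p))
    {p q : Fin (n+1)} (hne : p ≠ q)
    (hlen : invLen (posA n) b
      < invLen (posA n) (b * reflRoot (eps (n+1) p - eps (n+1) q))) :
    (∀ j, (b * reflRoot (eps (n+1) p - eps (n+1) q)) (eps (n+1) j)
        = eps (n+1) ((π * Equiv.swap p q) j))
    ∧ ∀ t r, (cnt (π * Equiv.swap p q) t r).card ≤ (cnt π t r).card := by
  have hmul : ∀ j, (b * reflRoot (eps (n+1) p - eps (n+1) q)) (eps (n+1) j)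
      = eps (n+1) ((π * Equiv.swap p q) j) := by
    intro j
    show b (reflRoot (eps (n+1) p - eps (n+1) q) (eps (n+1) j)) = _
    rw [reflRoot_eps hne, hπ]
    rfl
  refine ⟨hmul, ?_⟩
  have hlen' : (pairs π).card < (pairs (π * Equiv.swap p q)).card := by
    rwa [invLen_eq hπ, invLen_eq hmul] at hlen
  have hππ : π p ≠ π q := fun h => hne (π.injective h)
  rcases lt_or_gt_of_ne hne with hpq | hqp
  · have hord : π p < π q := by
      rcases lt_or_gt_of_ne hππ with h | h
      · exact h
      · exact absurd hlen' (not_lt.mpr (pairs_swap_card_le hpq h))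
    exact fun t r => cnt_step hpq hord t r
  · rw [Equiv.swap_comm]
    have hord : π q < π p := by
      rcases lt_or_gt_of_ne hππ.symm with h | h
      · exact h
      · have := pairs_swap_card_le hqp h
        rw [← Equiv.swap_comm] at this
        exact absurd hlen' (not_lt.mpr this)
    exact fun t r => cnt_step hqp hord t r

lemma S0.chain_mono {x y : EuclideanSpace ℝ (Fin (n+1)) ≃ₗᵢ[ℝ] EuclideanSpace ℝ (Fin (n+1))}
    (h : bruhatLE (rootsA n) (posA n) x y) :
    ∀ σ : Equiv.Perm (Fin (n+1)), (∀ p, x (eps (n+1) p) = eps (n+1) (σ p)) →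
      ∃ π : Equiv.Perm (Fin (n+1)), (∀ p, y (eps (n+1) p) = eps (n+1) (π p)) ∧
        ∀ t r, (cnt π t r).card ≤ (cnt σ t r).card := by
  induction h with
  | refl => exact fun σ hσ => ⟨σ, hσ, fun t r => le_rfl⟩
  | tail hxb hstep ih =>
    intro σ hσ
    obtain ⟨π, hπ, hle⟩ := ih σ hσ
    obtain ⟨⟨α, hα, rfl⟩, hlen⟩ := hstep
    obtain ⟨p', q', hne, rfl⟩ := hα
    obtain ⟨hmul, hcnt⟩ := step_aux hπ hne hlen
    exact ⟨π * Equiv.swap p' q', hmul,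
      fun t r => le_trans (hcnt t r) (hle t r)⟩

end S0Main

/-- In type `A_n` (`n ≥ 1`), if `Δ⁺ = Φ_{w_1} ⊔ ⋯ ⊔ Φ_{w_k}` and `u ∈ W`
satisfies `w_i ≤ w_i u` in the Bruhat order for all `i`, then `u = e`. -/
theorem statement0 (n : ℕ) (hn : 1 ≤ n) (k : ℕ)
    (w : Fin k → (EuclideanSpace ℝ (Fin (n + 1)) ≃ₗᵢ[ℝ] EuclideanSpace ℝ (Fin (n + 1))))
    (hw : ∀ i, w i ∈ WA n)
    (hcover : posA n = ⋃ i, invSet (posA n) (w i))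
    (hdisj : ∀ i j, i ≠ j → Disjoint (invSet (posA n) (w i)) (invSet (posA n) (w j)))
    (u : EuclideanSpace ℝ (Fin (n + 1)) ≃ₗᵢ[ℝ] EuclideanSpace ℝ (Fin (n + 1)))
    (hu : u ∈ WA n)
    (hle : ∀ i, bruhatLE (rootsA n) (posA n) (w i) (w i * u)) :
    u = 1 := by
  classical
  open S0 in
  by_contra hne1
  obtain ⟨τ, hτ⟩ := hu
  have hSne : (Finset.univ.filter (fun p => τ p ≠ p)).Nonempty := by
    by_contra hS
    rw [Finset.not_nonempty_iff_eq_empty, Finset.filter_eq_empty_iff] at hS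
    refine hne1 (eq_one_of_eps_fixed fun p => ?_)
    rw [hτ p, not_ne_iff.mp (hS (Finset.mem_univ p))]
  set S := Finset.univ.filter (fun p => τ p ≠ p) with hSdef
  set t0 := S.min' hSne with ht0def
  have ht0S : t0 ∈ S := Finset.min'_mem S hSne
  have ht0ne : τ t0 ≠ t0 := (Finset.mem_filter.mp ht0S).2
  have hfix : ∀ p, p < t0 → τ p = p := by
    intro p hp
    by_contra h
    exact absurd hp (not_lt.mpr (Finset.min'_le S p (Finset.mem_filter.mpr ⟨Finset.mem_univ p, h⟩)))
  have ht0b : t0 < τ t0 := by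
    rcases lt_trichotomy t0 (τ t0) with h | h | h
    · exact h
    · exact absurd h.symm ht0ne
    · exact absurd (τ.injective (hfix (τ t0) h)) ht0ne
  have hval : eps (n+1) t0 - eps (n+1) (τ t0) ∈ posA n := ⟨t0, τ t0, ht0b, rfl⟩
  rw [hcover] at hval
  obtain ⟨i, hi⟩ := Set.mem_iUnion.mp hval
  obtain ⟨σ, hσ⟩ := hw i
  obtain ⟨-, hnegmem⟩ := hi
  have hW : w i (eps (n+1) t0 - eps (n+1) (τ t0))
      = eps (n+1) (σ t0) - eps (n+1) (σ (τ t0)) := by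
    rw [map_sub, hσ, hσ]
  rw [hW, neg_sub] at hnegmem
  obtain ⟨p', q', hpq', heq⟩ := hnegmem
  have hbt : σ (τ t0) ≠ σ t0 := fun h => (ne_of_gt ht0b) (σ.injective h)
  obtain ⟨h1, h2⟩ := eps_sub_inj hbt (ne_of_lt hpq') heq
  have hσbt : σ (τ t0) < σ t0 := by rw [h1, h2]; exact hpq'
  obtain ⟨π, hπ, hcnt⟩ := chain_mono (hle i) σ hσ
  have hπτ : ∀ p, π p = σ (τ p) := by
    intro p
    have hwu : (w i * u) (eps (n+1) p) = eps (n+1) (σ (τ p)) := by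
      show w i (u (eps (n+1) p)) = _
      rw [hτ p, hσ]
    exact eps_inj (by rw [← hπ p, hwu])
  have hkey := hcnt t0 (σ (τ t0))
  have hA : cnt σ t0 (σ (τ t0)) = (cnt π t0 (σ (τ t0))).erase t0 := by
    ext j
    simp only [cnt, Finset.mem_erase, Finset.mem_filter, Finset.mem_univ, true_and]
    constructor
    · rintro ⟨hj1, hj2⟩
      have hjne : j ≠ t0 := by
        rintro rfl
        exact absurd hj2 (not_le.mpr hσbt)
      have hjlt : j < t0 := lt_of_le_of_ne hj1 hjne
      exact ⟨hjne, hj1, by rw [hπτ, hfix j hjlt]; exact hj2⟩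
    · rintro ⟨hjne, hj1, hj2⟩
      have hjlt : j < t0 := lt_of_le_of_ne hj1 hjne
      rw [hπτ, hfix j hjlt] at hj2
      exact ⟨hj1, hj2⟩
  have ht0mem : t0 ∈ cnt π t0 (σ (τ t0)) := by
    simp only [cnt, Finset.mem_filter, Finset.mem_univ, true_and]
    exact ⟨le_rfl, by rw [hπτ]⟩
  have hcard := Finset.card_erase_add_one ht0mem
  rw [hA] at hkey
  omega


end
end

section
/- Let n ≥ 2 and let W be the Weyl group of type B_n. Suppose w_1, …, w_k ∈ W are such that the positive roots Δ⁺ are the disjoint union Δ⁺ = Φ_{w_1} ⊔ Φ_{w_2} ⊔ ⋯ ⊔ Φ_{w_k} of their inversion sets. If u ∈ W satisfies w_i ≤ w_i u in the Bruhat order for every i = 1, …, k, then u = e (the identity). -/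
open RealInnerProductSpace

noncomputable section

variable {V : Type*} [NormedAddCommGroup V] [InnerProductSpace ℝ V] [FiniteDimensional ℝ V]

/-- The group of signed permutations: isometries of `ℝ^n` sending each standard basis
vector to plus or minus a standard basis vector. -/
def signedPerm (n : ℕ) : Set (EuclideanSpace ℝ (Fin n) ≃ₗᵢ[ℝ] EuclideanSpace ℝ (Fin n)) :=
  {g | ∀ p, ∃ q, g (eps n p) = eps n q ∨ g (eps n p) = -eps n q}

/-- The group of even-signed permutations: signed permutations with an even number of
sign changes. -/
def evenSignedPerm (n : ℕ) :
    Set (EuclideanSpace ℝ (Fin n) ≃ₗᵢ[ℝ] EuclideanSpace ℝ (Fin n)) :=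
  {g | g ∈ signedPerm n ∧ Even (Set.ncard {p : Fin n | ∃ q, g (eps n p) = -eps n q})}

/-- The positive roots of type `B_n`: `ε_p` and `ε_p ± ε_q` for `p < q`. -/
def posB (n : ℕ) : Set (EuclideanSpace ℝ (Fin n)) :=
  {v | (∃ p, v = eps n p) ∨
    ∃ p q : Fin n, p < q ∧ (v = eps n p + eps n q ∨ v = eps n p - eps n q)}

/-- The roots of type `B_n`. -/
def rootsB (n : ℕ) : Set (EuclideanSpace ℝ (Fin n)) := {v | v ∈ posB n ∨ -v ∈ posB n}

/-- The positive roots of type `C_n`: `2ε_p` and `ε_p ± ε_q` for `p < q`. -/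
def posC (n : ℕ) : Set (EuclideanSpace ℝ (Fin n)) :=
  {v | (∃ p, v = (2 : ℝ) • eps n p) ∨
    ∃ p q : Fin n, p < q ∧ (v = eps n p + eps n q ∨ v = eps n p - eps n q)}

/-- The roots of type `C_n`. -/
def rootsC (n : ℕ) : Set (EuclideanSpace ℝ (Fin n)) := {v | v ∈ posC n ∨ -v ∈ posC n}

/-- The positive roots of type `D_n`: `ε_p ± ε_q` for `p < q`. -/
def posD (n : ℕ) : Set (EuclideanSpace ℝ (Fin n)) :=
  {v | ∃ p q : Fin n, p < q ∧ (v = eps n p + eps n q ∨ v = eps n p - eps n q)}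

/-- The roots of type `D_n`. -/
def rootsD (n : ℕ) : Set (EuclideanSpace ℝ (Fin n)) := {v | v ∈ posD n ∨ -v ∈ posD n}

section Aux

namespace Stmt1Aux

variable {n : ℕ}

lemma inner_eps_eps (p q : Fin n) : ⟪eps n p, eps n q⟫ = if p = q then (1:ℝ) else 0 := by
  rw [eps, eps, EuclideanSpace.inner_single_left]
  simp [EuclideanSpace.single_apply]

/-- the positive regular functional vector -/
noncomputable def dlt (n : ℕ) : EuclideanSpace ℝ (Fin n) :=
  ∑ p : Fin n, ((n : ℝ) - p.val) • eps n p

lemma inner_eps_dlt (p : Fin n) : ⟪eps n p, dlt n⟫ = (n : ℝ) - p.val := by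
  rw [dlt, inner_sum]
  rw [Finset.sum_eq_single p (fun q _ hq => by
    rw [real_inner_smul_right, inner_eps_eps, if_neg (Ne.symm hq), mul_zero])
    (fun h => absurd (Finset.mem_univ p) h)]
  rw [real_inner_smul_right, inner_eps_eps, if_pos rfl, mul_one]

lemma f_pos {γ : EuclideanSpace ℝ (Fin n)} (hγ : γ ∈ posB n) : 0 < ⟪γ, dlt n⟫ := by
  obtain (⟨p, rfl⟩ | ⟨p, q, hpq, (rfl | rfl)⟩) := hγ
  · rw [inner_eps_dlt]
    have : (p.val : ℝ) < n := by exact_mod_cast p.2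
    linarith
  · rw [inner_add_left, inner_eps_dlt, inner_eps_dlt]
    have h1 : (p.val : ℝ) < n := by exact_mod_cast p.2
    have h2 : (q.val : ℝ) < n := by exact_mod_cast q.2
    linarith
  · rw [inner_sub_left, inner_eps_dlt, inner_eps_dlt]
    have : (p.val : ℝ) < q.val := by exact_mod_cast hpq
    linarith

lemma posB_ne_zero {γ : EuclideanSpace ℝ (Fin n)} (hγ : γ ∈ posB n) : γ ≠ 0 := by
  intro h
  have := f_pos hγ
  rw [h, inner_zero_left] at this
  exact lt_irrefl _ this

/-- the fundamental coweight vectors -/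
noncomputable def om (n : ℕ) (j : Fin n) : EuclideanSpace ℝ (Fin n) :=
  ∑ m ∈ Finset.univ.filter (· ≤ j), eps n m

lemma inner_eps_om (p j : Fin n) : ⟪eps n p, om n j⟫ = if p ≤ j then (1:ℝ) else 0 := by
  classical
  rw [om, inner_sum]
  rw [Finset.sum_congr rfl (fun m _ => inner_eps_eps p m)]
  rw [Finset.sum_ite_eq (Finset.univ.filter (· ≤ j)) p (fun _ => (1:ℝ))]
  simp

lemma om_nonneg {γ : EuclideanSpace ℝ (Fin n)} (hγ : γ ∈ posB n) (j : Fin n) :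
    0 ≤ ⟪γ, om n j⟫ := by
  obtain (⟨p, rfl⟩ | ⟨p, q, hpq, (rfl | rfl)⟩) := hγ
  · rw [inner_eps_om]; split <;> norm_num
  · rw [inner_add_left, inner_eps_om, inner_eps_om]; split <;> split <;> norm_num
  · rw [inner_sub_left, inner_eps_om, inner_eps_om]
    by_cases hq : q ≤ j
    · rw [if_pos (le_of_lt (lt_of_lt_of_le hpq hq)), if_pos hq]; norm_num
    · rw [if_neg hq]; split <;> norm_num

lemma om_pos {γ : EuclideanSpace ℝ (Fin n)} (hγ : γ ∈ posB n) :
    ∃ j, 0 < ⟪γ, om n j⟫ := by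
  obtain (⟨p, rfl⟩ | ⟨p, q, hpq, (rfl | rfl)⟩) := hγ
  · exact ⟨p, by rw [inner_eps_om, if_pos le_rfl]; norm_num⟩
  · refine ⟨p, ?_⟩
    rw [inner_add_left, inner_eps_om, inner_eps_om, if_pos le_rfl,
      if_neg (not_le_of_gt hpq)]
    norm_num
  · refine ⟨p, ?_⟩
    rw [inner_sub_left, inner_eps_om, inner_eps_om, if_pos le_rfl,
      if_neg (not_le_of_gt hpq)]
    norm_num

lemma posB_finite (n : ℕ) : (posB n).Finite := by
  have hsub : posB n ⊆ (Set.range (eps n)) ∪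
      ((Set.range fun pq : Fin n × Fin n => eps n pq.1 + eps n pq.2) ∪
       (Set.range fun pq : Fin n × Fin n => eps n pq.1 - eps n pq.2)) := by
    rintro v (⟨p, rfl⟩ | ⟨p, q, _, (rfl | rfl)⟩)
    · exact Or.inl ⟨p, rfl⟩
    · exact Or.inr (Or.inl ⟨(p, q), rfl⟩)
    · exact Or.inr (Or.inr ⟨(p, q), rfl⟩)
  exact ((Set.finite_range _).union ((Set.finite_range _).union (Set.finite_range _))).subset hsub

lemma neg_mem_rootsB {v : EuclideanSpace ℝ (Fin n)} (hv : v ∈ rootsB n) : -v ∈ rootsB n := by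
  rcases hv with h | h
  · exact Or.inr (by rwa [neg_neg])
  · exact Or.inl h

lemma eps_pm_mem {r s : Fin n} (hrs : r ≠ s) :
    eps n r + eps n s ∈ rootsB n ∧ eps n r - eps n s ∈ rootsB n := by
  rcases lt_or_gt_of_ne hrs with h | h
  · exact ⟨Or.inl (Or.inr ⟨r, s, h, Or.inl rfl⟩), Or.inl (Or.inr ⟨r, s, h, Or.inr rfl⟩)⟩
  · constructor
    · exact Or.inl (Or.inr ⟨s, r, h, Or.inl (by abel)⟩)
    · refine Or.inr (Or.inr ⟨s, r, h, Or.inr ?_⟩)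
      abel
  
lemma eps_inj {p q : Fin n} (h : eps n p = eps n q) : p = q := by
  have := congrArg (fun v => ⟪eps n p, v⟫) h
  simp only [inner_eps_eps, if_pos rfl] at this
  by_contra hne
  rw [if_neg hne] at this
  norm_num at this

lemma eps_ne_neg (p q : Fin n) : eps n p ≠ -eps n q := by
  intro h
  have h2 := congrArg (fun v => ⟪eps n p, v⟫) h
  simp only [inner_neg_right, inner_eps_eps, if_pos rfl] at h2
  rcases eq_or_ne p q with h3 | h3
  · rw [if_pos h3] at h2; norm_num at h2
  · rw [if_neg h3] at h2; norm_num at h2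

lemma support_eq {x : EuclideanSpace ℝ (Fin n) ≃ₗᵢ[ℝ] EuclideanSpace ℝ (Fin n)}
    {p q r : Fin n}
    (hp : x (eps n p) = eps n r ∨ x (eps n p) = -eps n r)
    (hq : x (eps n q) = eps n r ∨ x (eps n q) = -eps n r) : p = q := by
  have h : x (eps n p) = x (eps n q) ∨ x (eps n p) = -(x (eps n q)) := by
    rcases hp with hp | hp <;> rcases hq with hq | hq
    · exact Or.inl (hp.trans hq.symm)
    · exact Or.inr (by rw [hp, hq, neg_neg])
    · exact Or.inr (by rw [hp, hq])
    · exact Or.inl (by rw [hp, hq])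
  rcases h with h | h
  · exact eps_inj (x.injective h)
  · rw [← map_neg] at h
    exact absurd (x.injective h) (eps_ne_neg p q)

lemma signedPerm_map_rootsB {x : EuclideanSpace ℝ (Fin n) ≃ₗᵢ[ℝ] EuclideanSpace ℝ (Fin n)}
    (hx : x ∈ signedPerm n) {v : EuclideanSpace ℝ (Fin n)} (hv : v ∈ rootsB n) :
    x v ∈ rootsB n := by
  have key : ∀ γ ∈ posB n, x γ ∈ rootsB n := by
    rintro γ (⟨p, rfl⟩ | ⟨p, q, hpq, (rfl | rfl)⟩)
    · obtain ⟨r, hr | hr⟩ := hx p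
      · exact Or.inl (Or.inl ⟨r, hr⟩)
      · refine Or.inr (Or.inl ⟨r, ?_⟩)
        rw [hr, neg_neg]
    all_goals {
      obtain ⟨r, hr⟩ := hx p
      obtain ⟨s, hs⟩ := hx q
      have hrs : r ≠ s := fun h => absurd (support_eq hr (h ▸ hs)) (ne_of_lt hpq)
      first
      | rw [map_add] | rw [map_sub]
      rcases hr with hr | hr <;> rcases hs with hs | hs <;> rw [hr, hs]
      case _ => first
        | exact (eps_pm_mem hrs).1
        | exact (eps_pm_mem hrs).2
      all_goals first
        | exact (eps_pm_mem hrs).1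
        | exact (eps_pm_mem hrs).2
        | (rw [sub_neg_eq_add]; exact (eps_pm_mem hrs).1)
        | (rw [show -(eps n r) + eps n s = -(eps n r - eps n s) by abel]
           exact neg_mem_rootsB (eps_pm_mem hrs).2)
        | (rw [show -(eps n r) + -(eps n s) = -(eps n r + eps n s) by abel]
           exact neg_mem_rootsB (eps_pm_mem hrs).1)
        | (rw [show -(eps n r) - eps n s = -(eps n r + eps n s) by abel]
           exact neg_mem_rootsB (eps_pm_mem hrs).1)
        | (rw [show -(eps n r) - -(eps n s) = -(eps n r - eps n s) by abel]
           exact neg_mem_rootsB (eps_pm_mem hrs).2) }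
  rcases hv with h | h
  · exact key v h
  · have h2 := key _ h
    rw [show x (-v) = -(x v) from map_neg x v] at h2
    have h3 := neg_mem_rootsB h2
    rwa [neg_neg] at h3


lemma reflRoot_apply' (α v : EuclideanSpace ℝ (Fin n)) :
    reflRoot α v = v - (2 * ⟪α, v⟫ / ⟪α, α⟫) • α := by
  rw [reflRoot, Submodule.reflection_apply, Submodule.starProjection_orthogonal_val,
    Submodule.starProjection_singleton, real_inner_self_eq_norm_sq]
  rw [two_smul]
  rw [show 2 * ⟪α, v⟫ / (‖α‖ ^ 2) = ⟪α, v⟫ / (‖α‖ ^ 2) + ⟪α, v⟫ / (‖α‖ ^ 2) by ring]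
  rw [add_smul]
  abel

lemma reflRoot_neg (α : EuclideanSpace ℝ (Fin n)) : reflRoot (-α) = reflRoot α := by
  rw [reflRoot, reflRoot]
  congr 1
  rw [show ({-α} : Set (EuclideanSpace ℝ (Fin n))) = -({α} : Set _) from (Set.neg_singleton α).symm,
    Submodule.span_neg]

lemma reflRoot_invol (α v : EuclideanSpace ℝ (Fin n)) :
    reflRoot α (reflRoot α v) = v := Submodule.reflection_reflection _ v

lemma inner_self_posB {α : EuclideanSpace ℝ (Fin n)} (hα : α ∈ posB n) : 0 < ⟪α, α⟫ := by
  rw [real_inner_self_eq_norm_sq]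
  exact pow_pos (norm_pos_iff.mpr (posB_ne_zero hα)) 2

lemma inner_eps_self (x : Fin n) : ⟪eps n x, eps n x⟫ = (1:ℝ) := by
  rw [inner_eps_eps, if_pos rfl]

lemma inner_eps_ne {x y : Fin n} (h : x ≠ y) : ⟪eps n x, eps n y⟫ = (0:ℝ) := by
  rw [inner_eps_eps, if_neg h]

lemma inner_pp_self {r s : Fin n} (h : r ≠ s) :
    ⟪eps n r + eps n s, eps n r + eps n s⟫ = (2:ℝ) := by
  rw [inner_add_left, inner_add_right, inner_add_right, inner_eps_self, inner_eps_self,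
    inner_eps_ne h, inner_eps_ne h.symm]
  norm_num

lemma inner_mm_self {r s : Fin n} (h : r ≠ s) :
    ⟪eps n r - eps n s, eps n r - eps n s⟫ = (2:ℝ) := by
  rw [inner_sub_left, inner_sub_right, inner_sub_right, inner_eps_self, inner_eps_self,
    inner_eps_ne h, inner_eps_ne h.symm]
  norm_num

lemma reflRoot_mem_signedPerm {α : EuclideanSpace ℝ (Fin n)} (hα : α ∈ posB n) :
    reflRoot α ∈ signedPerm n := by
  obtain (⟨r, rfl⟩ | ⟨r, s, hrs', (rfl | rfl)⟩) := hα
  · intro p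
    rcases eq_or_ne r p with h | h
    · refine ⟨p, Or.inr ?_⟩
      rw [h, reflRoot_apply', inner_eps_self]
      module
    · refine ⟨p, Or.inl ?_⟩
      rw [reflRoot_apply', inner_eps_ne h, inner_eps_self]
      module
  · have hrs : r ≠ s := ne_of_lt hrs'
    have hself := inner_pp_self hrs
    intro p
    rcases eq_or_ne r p with h | h
    · refine ⟨s, Or.inr ?_⟩
      rw [← h, reflRoot_apply', hself, inner_add_left, inner_eps_self,
        inner_eps_ne (Ne.symm hrs)]
      module
    rcases eq_or_ne s p with h2 | h2
    · refine ⟨r, Or.inr ?_⟩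
      rw [← h2, reflRoot_apply', hself, inner_add_left, inner_eps_self,
        inner_eps_ne hrs]
      module
    · refine ⟨p, Or.inl ?_⟩
      rw [reflRoot_apply', hself, inner_add_left, inner_eps_ne h, inner_eps_ne h2]
      module
  · have hrs : r ≠ s := ne_of_lt hrs'
    have hself := inner_mm_self hrs
    intro p
    rcases eq_or_ne r p with h | h
    · refine ⟨s, Or.inl ?_⟩
      rw [← h, reflRoot_apply', hself, inner_sub_left, inner_eps_self,
        inner_eps_ne (Ne.symm hrs)]
      module
    rcases eq_or_ne s p with h2 | h2
    · refine ⟨r, Or.inl ?_⟩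
      rw [← h2, reflRoot_apply', hself, inner_sub_left, inner_eps_self,
        inner_eps_ne hrs]
      module
    · refine ⟨p, Or.inl ?_⟩
      rw [reflRoot_apply', hself, inner_sub_left, inner_eps_ne h, inner_eps_ne h2]
      module

lemma mul_mem_signedPerm {x y : EuclideanSpace ℝ (Fin n) ≃ₗᵢ[ℝ] EuclideanSpace ℝ (Fin n)}
    (hx : x ∈ signedPerm n) (hy : y ∈ signedPerm n) : x * y ∈ signedPerm n := by
  intro p
  obtain ⟨q, hq | hq⟩ := hy p
  · obtain ⟨r, hr⟩ := hx q
    refine ⟨r, ?_⟩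
    rw [show (x * y) (eps n p) = x (y (eps n p)) from rfl, hq]
    exact hr
  · obtain ⟨r, hr | hr⟩ := hx q
    · refine ⟨r, Or.inr ?_⟩
      rw [show (x * y) (eps n p) = x (y (eps n p)) from rfl, hq, map_neg, hr]
    · refine ⟨r, Or.inl ?_⟩
      rw [show (x * y) (eps n p) = x (y (eps n p)) from rfl, hq, map_neg, hr, neg_neg]


lemma invLen_le {x : EuclideanSpace ℝ (Fin n) ≃ₗᵢ[ℝ] EuclideanSpace ℝ (Fin n)}
    (hx : x ∈ signedPerm n) {α : EuclideanSpace ℝ (Fin n)} (hα : α ∈ posB n)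
    (hneg : -(x α) ∈ posB n) :
    invLen (posB n) (x * reflRoot α) ≤ invLen (posB n) x := by
  classical
  show (invSet (posB n) (x * reflRoot α)).ncard ≤ (invSet (posB n) x).ncard
  refine Set.ncard_le_ncard_of_injOn
    (fun β => if reflRoot α β ∈ posB n then reflRoot α β else β) ?_ ?_
    ((posB_finite n).subset (fun β hβ => hβ.1))
  · rintro β ⟨hβ1, hβ2⟩
    show (if reflRoot α β ∈ posB n then reflRoot α β else β) ∈ invSet (posB n) x
    rw [show (x * reflRoot α) β = x (reflRoot α β) from rfl] at hβ2
    by_cases hs : reflRoot α β ∈ posB n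
    · rw [if_pos hs]
      exact ⟨hs, hβ2⟩
    · rw [if_neg hs]
      refine ⟨hβ1, ?_⟩
      have hform := reflRoot_apply' α β
      set c := 2 * ⟪α, β⟫ / ⟪α, α⟫ with hc_def
      have hsr : reflRoot α β ∈ rootsB n :=
        signedPerm_map_rootsB (reflRoot_mem_signedPerm hα) (Or.inl hβ1)
      have hsn : -(reflRoot α β) ∈ posB n := hsr.resolve_left hs
      have h1 : ⟪reflRoot α β, dlt n⟫ < 0 := by
        have := f_pos hsn
        rw [inner_neg_left] at this
        linarith
      have h2 : 0 < ⟪β, dlt n⟫ := f_pos hβ1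
      have h3 : 0 < ⟪α, dlt n⟫ := f_pos hα
      have h4 : ⟪reflRoot α β, dlt n⟫ = ⟪β, dlt n⟫ - c * ⟪α, dlt n⟫ := by
        rw [hform, inner_sub_left, real_inner_smul_left]
      have hc : 0 < c := by nlinarith
      have hxβeq : x β = x (reflRoot α β) + c • (x α) := by
        have hβeq : β = reflRoot α β + c • α := by rw [hform]; abel
        conv_lhs => rw [hβeq]
        rw [map_add, map_smul]
      have h5 : ⟪x (reflRoot α β), dlt n⟫ < 0 := by
        have := f_pos hβ2
        rw [inner_neg_left] at this
        linarith
      have h6 : ⟪x α, dlt n⟫ < 0 := by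
        have := f_pos hneg
        rw [inner_neg_left] at this
        linarith
      have h7 : ⟪x β, dlt n⟫ < 0 := by
        rw [hxβeq, inner_add_left, real_inner_smul_left]
        nlinarith
      have hxβr : x β ∈ rootsB n := signedPerm_map_rootsB hx (Or.inl hβ1)
      refine hxβr.resolve_left (fun hmem => ?_)
      exact absurd (f_pos hmem) (by linarith)
  · intro β1 h1 β2 h2 he
    simp only [] at he
    by_cases c1 : reflRoot α β1 ∈ posB n
    · by_cases c2 : reflRoot α β2 ∈ posB n
      · rw [if_pos c1, if_pos c2] at he
        exact (reflRoot α).injective he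
      · rw [if_pos c1, if_neg c2] at he
        exfalso
        apply c2
        have hr : reflRoot α β2 = β1 := by rw [← he, reflRoot_invol]
        rw [hr]
        exact h1.1
    · by_cases c2 : reflRoot α β2 ∈ posB n
      · rw [if_neg c1, if_pos c2] at he
        exfalso
        apply c1
        have hr : reflRoot α β1 = β2 := by rw [he, reflRoot_invol]
        rw [hr]
        exact h2.1
      · rw [if_neg c1, if_neg c2] at he
        exact he

lemma step_pos {x : EuclideanSpace ℝ (Fin n) ≃ₗᵢ[ℝ] EuclideanSpace ℝ (Fin n)}
    (hx : x ∈ signedPerm n) {α : EuclideanSpace ℝ (Fin n)} (hα : α ∈ posB n)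
    (hlt : invLen (posB n) x < invLen (posB n) (x * reflRoot α)) : x α ∈ posB n := by
  have hroot : x α ∈ rootsB n := signedPerm_map_rootsB hx (Or.inl hα)
  refine hroot.resolve_right (fun hneg => ?_)
  exact absurd hlt (not_lt.mpr (invLen_le hx hα hneg))

lemma chain {ω₁ ω₂ : EuclideanSpace ℝ (Fin n)}
    (h₁ : ∀ γ ∈ posB n, 0 ≤ ⟪γ, ω₁⟫) (h₂ : ∀ γ ∈ posB n, 0 ≤ ⟪γ, ω₂⟫)
    {x y : EuclideanSpace ℝ (Fin n) ≃ₗᵢ[ℝ] EuclideanSpace ℝ (Fin n)}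
    (hxy : bruhatLE (rootsB n) (posB n) x y) (hx : x ∈ signedPerm n) :
    y ∈ signedPerm n ∧ ⟪ω₁, y ω₂⟫ ≤ ⟪ω₁, x ω₂⟫ := by
  induction hxy with
  | refl => exact ⟨hx, le_refl _⟩
  | @tail b c hab hbc ih =>
    obtain ⟨⟨α, hαr, rfl⟩, hlen⟩ := hbc
    obtain ⟨hbSP, hineq⟩ := ih
    obtain ⟨α', hα', hrefl⟩ : ∃ α', α' ∈ posB n ∧ reflRoot α = reflRoot α' := by
      rcases hαr with h | h
      · exact ⟨α, h, rfl⟩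
      · exact ⟨-α, h, (reflRoot_neg α).symm⟩
    rw [hrefl] at hlen ⊢
    have hpos : b α' ∈ posB n := step_pos hbSP hα' hlen
    refine ⟨mul_mem_signedPerm hbSP (reflRoot_mem_signedPerm hα'), ?_⟩
    have hsω : (b * reflRoot α') ω₂ = b ω₂ - (2 * ⟪α', ω₂⟫ / ⟪α', α'⟫) • (b α') := by
      rw [show (b * reflRoot α') ω₂ = b (reflRoot α' ω₂) from rfl, reflRoot_apply',
        map_sub, map_smul]
    rw [hsω, inner_sub_right, real_inner_smul_right]
    have hcnn : 0 ≤ 2 * ⟪α', ω₂⟫ / ⟪α', α'⟫ :=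
      div_nonneg (by have := h₂ α' hα'; linarith) (le_of_lt (inner_self_posB hα'))
    have hp : 0 ≤ ⟪ω₁, b α'⟫ := by rw [real_inner_comm]; exact h₁ _ hpos
    nlinarith [hineq]

end Stmt1Aux
end Aux

open Stmt1Aux

/-- In type `B_n` (`n ≥ 2`), if `Δ⁺ = Φ_{w_1} ⊔ ⋯ ⊔ Φ_{w_k}` and `u ∈ W`
satisfies `w_i ≤ w_i u` in the Bruhat order for all `i`, then `u = e`. -/
theorem statement1 (n : ℕ) (hn : 2 ≤ n) (k : ℕ)
    (w : Fin k → (EuclideanSpace ℝ (Fin n) ≃ₗᵢ[ℝ] EuclideanSpace ℝ (Fin n)))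
    (hw : ∀ i, w i ∈ signedPerm n)
    (hcover : posB n = ⋃ i, invSet (posB n) (w i))
    (hdisj : ∀ i j, i ≠ j → Disjoint (invSet (posB n) (w i)) (invSet (posB n) (w j)))
    (u : EuclideanSpace ℝ (Fin n) ≃ₗᵢ[ℝ] EuclideanSpace ℝ (Fin n))
    (hu : u ∈ signedPerm n)
    (hle : ∀ i, bruhatLE (rootsB n) (posB n) (w i) (w i * u)) :
    u = 1 := by
  classical
  have key : ∀ p, u (eps n p) = eps n p := by
    by_contra hcon
    push_neg at hcon
    set Mf : Finset (Fin n) := Finset.univ.filter (fun p => u (eps n p) ≠ eps n p) with hMf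
    have hMne : Mf.Nonempty := by
      obtain ⟨p, hp⟩ := hcon
      exact ⟨p, by rw [hMf, Finset.mem_filter]; exact ⟨Finset.mem_univ p, hp⟩⟩
    set a := Mf.min' hMne with ha_def
    have haMf : a ∈ Mf := Finset.min'_mem Mf hMne
    have haM : u (eps n a) ≠ eps n a := by
      rw [hMf] at haMf
      exact (Finset.mem_filter.mp haMf).2
    obtain ⟨d, hd⟩ := hu a
    have hdM : d ∈ Mf := by
      by_contra hdf
      rw [hMf, Finset.mem_filter, not_and, not_not] at hdf
      have hdfix : u (eps n d) = eps n d := hdf (Finset.mem_univ d)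
      rcases hd with hd | hd
      · have h1 : eps n a = eps n d := u.injective (hd.trans hdfix.symm)
        exact haM (hd.trans h1.symm)
      · have h1 : eps n a = -eps n d := by
          apply u.injective
          rw [hd, map_neg, hdfix]
        exact eps_ne_neg a d h1
    have had : a ≤ d := Finset.min'_le Mf d hdM
    have hfix : ∀ m, m < a → u (eps n m) = eps n m := by
      intro m hm
      by_contra hmem
      have hmMf : m ∈ Mf := by
        rw [hMf, Finset.mem_filter]
        exact ⟨Finset.mem_univ m, hmem⟩
      exact absurd (Finset.min'_le Mf m hmMf) (not_le_of_gt hm)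
    obtain ⟨β, hβ, c, hc, hz⟩ : ∃ β, β ∈ posB n ∧ ∃ c : ℝ, 0 < c ∧
        eps n a - u (eps n a) = c • β := by
      rcases eq_or_ne a d with h | hadne
      · rcases hd with hd | hd
        · exact absurd (by rw [hd, ← h]) haM
        · refine ⟨eps n a, Or.inl ⟨a, rfl⟩, 2, by norm_num, ?_⟩
          rw [hd, ← h]
          module
      · have hlt : a < d := lt_of_le_of_ne had hadne
        rcases hd with hd | hd
        · exact ⟨eps n a - eps n d, Or.inr ⟨a, d, hlt, Or.inr rfl⟩, 1, one_pos,
            by rw [hd, one_smul]⟩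
        · refine ⟨eps n a + eps n d, Or.inr ⟨a, d, hlt, Or.inl rfl⟩, 1, one_pos, ?_⟩
          rw [hd, one_smul, sub_neg_eq_add]
    have hβunion : β ∈ ⋃ i, invSet (posB n) (w i) := by rw [← hcover]; exact hβ
    obtain ⟨i, hi⟩ := Set.mem_iUnion.mp hβunion
    obtain ⟨hβpos, hβneg⟩ := hi
    obtain ⟨j, hj⟩ := om_pos hβneg
    have hch := chain (ω₁ := om n j) (ω₂ := om n a)
      (fun γ hγ => om_nonneg hγ j) (fun γ hγ => om_nonneg hγ a) (hle i) (hw i)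
    have hineq := hch.2
    have hom : om n a - u (om n a) = c • β := by
      rw [om, map_sum, ← Finset.sum_sub_distrib, Finset.sum_eq_single a]
      · exact hz
      · intro m hmem hma
        have hm : m ≤ a := by simpa using (Finset.mem_filter.mp hmem).2
        rw [hfix m (lt_of_le_of_ne hm hma), sub_self]
      · intro h
        exact absurd (by simp : a ∈ Finset.univ.filter (· ≤ a)) h
    have hwu : (w i * u) (om n a) = (w i) (om n a) - c • ((w i) β) := by
      rw [show (w i * u) (om n a) = (w i) (u (om n a)) from rfl]
      rw [show u (om n a) = om n a - c • β from by rw [← hom]; abel]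
      rw [map_sub, map_smul]
    rw [hwu, inner_sub_right, real_inner_smul_right] at hineq
    have hneg' : ⟪om n j, (w i) β⟫ < 0 := by
      have h2 : (0:ℝ) < ⟪-((w i) β), om n j⟫ := hj
      rw [inner_neg_left] at h2
      rw [real_inner_comm]
      linarith
    nlinarith
  refine LinearIsometryEquiv.ext (fun v => ?_)
  have hv : v = ∑ p : Fin n, v p • eps n p := by
    have h := (EuclideanSpace.basisFun (Fin n) ℝ).sum_repr v
    simp only [EuclideanSpace.basisFun_repr, EuclideanSpace.basisFun_apply] at h
    exact h.symm
  have hfin : u v = v := by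
    conv_lhs => rw [hv]
    rw [map_sum]
    simp only [map_smul, key]
    exact hv.symm
  simpa using hfin


end
end

section
/- Let n ≥ 2 and let W be the Weyl group of type C_n. Suppose w_1, …, w_k ∈ W are such that the positive roots Δ⁺ are the disjoint union Δ⁺ = Φ_{w_1} ⊔ Φ_{w_2} ⊔ ⋯ ⊔ Φ_{w_k} of their inversion sets. If u ∈ W satisfies w_i ≤ w_i u in the Bruhat order for every i = 1, …, k, then u = e (the identity). -/
open RealInnerProductSpace

noncomputable section

variable {V : Type*} [NormedAddCommGroup V] [InnerProductSpace ℝ V] [FiniteDimensional ℝ V]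

namespace St2

variable {n : ℕ}

variable {n : ℕ}
lemma eps_apply (p r : Fin n) : eps n p r = if r = p then 1 else 0 := by
  simp [eps, EuclideanSpace.single_apply]
lemma apply_eq {x y : EuclideanSpace ℝ (Fin n)} (h : x = y) (r : Fin n) : x r = y r := by rw [h]
def Fpos (x : EuclideanSpace ℝ (Fin n)) : ℝ := ∑ r : Fin n, ((n : ℝ) - ((r : ℕ) : ℝ)) * x r
lemma Fpos_smul (c : ℝ) (x : EuclideanSpace ℝ (Fin n)) : Fpos (c • x) = c * Fpos x := by
  simp only [Fpos, Finset.mul_sum]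
  refine Finset.sum_congr rfl fun r _ => ?_
  show ((n : ℝ) - ((r : ℕ) : ℝ)) * (c * x r) = _
  ring
lemma Fpos_add (x y : EuclideanSpace ℝ (Fin n)) : Fpos (x + y) = Fpos x + Fpos y := by
  simp only [Fpos, ← Finset.sum_add_distrib]
  refine Finset.sum_congr rfl fun r _ => ?_
  show ((n : ℝ) - ((r : ℕ) : ℝ)) * (x r + y r) = _
  ring
lemma Fpos_neg (x : EuclideanSpace ℝ (Fin n)) : Fpos (-x) = - Fpos x := by
  simp only [Fpos, ← Finset.sum_neg_distrib]
  refine Finset.sum_congr rfl fun r _ => ?_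
  show ((n : ℝ) - ((r : ℕ) : ℝ)) * (- x r) = _
  ring
lemma Fpos_sub (x y : EuclideanSpace ℝ (Fin n)) : Fpos (x - y) = Fpos x - Fpos y := by
  rw [sub_eq_add_neg, Fpos_add, Fpos_neg]; ring
lemma Fpos_eps (p : Fin n) : Fpos (eps n p) = (n : ℝ) - (p : ℕ) := by
  simp [Fpos, eps_apply]
lemma fin_lt (p : Fin n) : ((p : ℕ) : ℝ) < (n : ℝ) := by exact_mod_cast p.isLt
lemma Fpos_pos {x : EuclideanSpace ℝ (Fin n)} (h : x ∈ posC n) : 0 < Fpos x := by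
  rcases h with ⟨p, rfl⟩ | ⟨p, q, hpq, rfl | rfl⟩
  · rw [Fpos_smul, Fpos_eps]
    have := fin_lt p; nlinarith
  · rw [Fpos_add, Fpos_eps, Fpos_eps]
    have := fin_lt p; have := fin_lt q; nlinarith
  · rw [Fpos_sub, Fpos_eps, Fpos_eps]
    have : ((p:ℕ):ℝ) < ((q:ℕ):ℝ) := by exact_mod_cast hpq
    nlinarith
lemma mem_posC_of_rootsC {x : EuclideanSpace ℝ (Fin n)} (h : x ∈ rootsC n) (hF : 0 < Fpos x) :
    x ∈ posC n := by
  rcases h with h | h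
  · exact h
  · exfalso; have := Fpos_pos h; rw [Fpos_neg] at this; linarith
-- section 2 --

lemma sub_mem_posC {p q : Fin n} (h : p < q) : eps n p - eps n q ∈ posC n :=
  Or.inr ⟨p, q, h, Or.inr rfl⟩

lemma add_mem_posC {p q : Fin n} (h : p < q) : eps n p + eps n q ∈ posC n :=
  Or.inr ⟨p, q, h, Or.inl rfl⟩

lemma two_smul_mem_posC (p : Fin n) : (2:ℝ) • eps n p ∈ posC n := Or.inl ⟨p, rfl⟩

lemma first_mem_posC {r r' : Fin n} (h : r < r') {b : ℝ} (hb : b = 1 ∨ b = -1) :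
    eps n r + b • eps n r' ∈ posC n := by
  rcases hb with rfl | rfl
  · simpa using add_mem_posC h
  · have : eps n r + (-1:ℝ) • eps n r' = eps n r - eps n r' := by module
    rw [this]; exact sub_mem_posC h

lemma pair_mem_rootsC {r r' : Fin n} (hne : r ≠ r') {a b : ℝ}
    (ha : a = 1 ∨ a = -1) (hb : b = 1 ∨ b = -1) :
    a • eps n r + b • eps n r' ∈ rootsC n := by
  have key : ∀ (s t : Fin n), s < t → ∀ (c d : ℝ), (c = 1 ∨ c = -1) → (d = 1 ∨ d = -1) →
      c • eps n s + d • eps n t ∈ rootsC n := by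
    intro s t hst c d hc hd
    rcases hc with rfl | rfl
    · left
      simpa using first_mem_posC hst hd
    · right
      have : -((-1:ℝ) • eps n s + d • eps n t) = eps n s + (-d) • eps n t := by module
      rw [this]
      exact first_mem_posC hst (by rcases hd with rfl | rfl <;> norm_num)
  rcases lt_or_gt_of_ne hne with h | h
  · exact key r r' h a b ha hb
  · have : a • eps n r + b • eps n r' = b • eps n r' + a • eps n r := by module
    rw [this]
    exact key r' r h b a hb ha

lemma Fpos_pair {r r' : Fin n} (a b : ℝ) :
    Fpos (a • eps n r + b • eps n r') = a * ((n : ℝ) - (r:ℕ)) + b * ((n:ℝ) - (r':ℕ)) := by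
  rw [Fpos_add, Fpos_smul, Fpos_smul, Fpos_eps, Fpos_eps]

lemma val_lt_iff {r r' : Fin n} : r < r' ↔ ((r:ℕ):ℝ) < ((r':ℕ):ℝ) := by
  rw [Fin.lt_def]; exact_mod_cast Iff.rfl

/-- Characterization of membership of `a • eps r + b • eps r'` in `posC`. -/
lemma pair_mem_posC_iff {r r' : Fin n} (hne : r ≠ r') {a b : ℝ}
    (ha : a = 1 ∨ a = -1) (hb : b = 1 ∨ b = -1) :
    a • eps n r + b • eps n r' ∈ posC n ↔ (r < r' ∧ a = 1) ∨ (r' < r ∧ b = 1) := by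
  have hroots := pair_mem_rootsC hne ha hb
  have hF : Fpos (a • eps n r + b • eps n r') = a * ((n : ℝ) - (r:ℕ)) + b * ((n:ℝ) - (r':ℕ)) :=
    Fpos_pair a b
  have h1 : ((r:ℕ):ℝ) < n := fin_lt r
  have h1' : ((r':ℕ):ℝ) < n := fin_lt r'
  have hvne : ((r:ℕ):ℝ) ≠ ((r':ℕ):ℝ) := by
    intro h; exact hne (Fin.ext (by exact_mod_cast h))
  constructor
  · intro hmem
    have hpos := Fpos_pos hmem
    rw [hF] at hpos
    rcases ha with rfl | rfl <;> rcases hb with rfl | rfl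
    · rcases lt_or_gt_of_ne hne with h | h
      · exact Or.inl ⟨h, rfl⟩
      · exact Or.inr ⟨h, rfl⟩
    · left
      refine ⟨val_lt_iff.2 ?_, rfl⟩
      by_contra hc
      push_neg at hc
      rcases hc.lt_or_eq with hlt | heq
      · nlinarith
      · exact hvne heq.symm
    · right
      refine ⟨val_lt_iff.2 ?_, rfl⟩
      by_contra hc
      push_neg at hc
      rcases hc.lt_or_eq with hlt | heq
      · nlinarith
      · exact hvne heq
    · exfalso; nlinarith
  · rintro (⟨hlt, rfl⟩ | ⟨hlt, rfl⟩)
    · apply mem_posC_of_rootsC hroots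
      rw [hF]
      have := val_lt_iff.1 hlt
      rcases hb with rfl | rfl <;> nlinarith
    · apply mem_posC_of_rootsC hroots
      rw [hF]
      have := val_lt_iff.1 hlt
      rcases ha with rfl | rfl <;> nlinarith

/-- Characterization: `(2s) • eps r ∈ posC` iff `s = 1`, for `s = ±1`. -/
lemma twosmul_mem_posC_iff {r : Fin n} {s : ℝ} (hs : s = 1 ∨ s = -1) :
    (2 * s) • eps n r ∈ posC n ↔ s = 1 := by
  constructor
  · intro hmem
    have hpos := Fpos_pos hmem
    rw [Fpos_smul, Fpos_eps] at hpos
    have h1 : ((r:ℕ):ℝ) < n := fin_lt r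
    rcases hs with rfl | rfl
    · rfl
    · exfalso; nlinarith
  · rintro rfl
    simpa using two_smul_mem_posC r


lemma eps_decomp (x : EuclideanSpace ℝ (Fin n)) : x = ∑ p, x p • eps n p := by
  ext r
  rw [WithLp.ofLp_sum, Finset.sum_apply]
  simp [eps, EuclideanSpace.single_apply]

lemma inner_apply' (x y : EuclideanSpace ℝ (Fin n)) : ⟪x, y⟫ = ∑ r, x r * y r := by
  rw [PiLp.inner_apply]; simp [RCLike.inner_apply]; exact Finset.sum_congr rfl fun _ _ => mul_comm _ _

lemma not_neg_mem_posC {x : EuclideanSpace ℝ (Fin n)} (h : x ∈ posC n) : -x ∉ posC n := by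
  intro h'
  have h1 := Fpos_pos h
  have h2 := Fpos_pos h'
  rw [Fpos_neg] at h2; linarith

lemma neg_mem_rootsC {x : EuclideanSpace ℝ (Fin n)} (h : x ∈ rootsC n) : -x ∈ rootsC n := by
  rcases h with h | h
  · exact Or.inr (by rwa [neg_neg])
  · exact Or.inl h

lemma posC_finite : (posC n).Finite := by
  apply Set.Finite.subset (Set.finite_range
    (fun t : Fin n × Fin n × Bool => if t.2.2 then eps n t.1 + eps n t.2.1 else eps n t.1 - eps n t.2.1))
  rintro x (⟨p, rfl⟩ | ⟨p, q, _, rfl | rfl⟩)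
  · exact ⟨(p, p, true), by simp [two_smul]⟩
  · exact ⟨(p, q, true), by simp⟩
  · exact ⟨(p, q, false), by simp⟩


/-! ### Signed permutation data -/

/-- `g` acts as the signed permutation with permutation `π` and signs `ε`. -/
def IsData (g : EuclideanSpace ℝ (Fin n) ≃ₗᵢ[ℝ] EuclideanSpace ℝ (Fin n))
    (π : Fin n → Fin n) (ε : Fin n → ℝ) : Prop :=
  (∀ p, ε p = 1 ∨ ε p = -1) ∧ ∀ p, g (eps n p) = ε p • eps n (π p)

lemma eps_eq_iff {p q : Fin n} : eps n p = eps n q ↔ p = q := by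
  constructor
  · intro h
    by_contra hpq
    have := apply_eq h p
    simp [eps_apply, hpq] at this
  · rintro rfl; rfl

lemma eps_ne_neg (p q : Fin n) : eps n p ≠ -eps n q := by
  intro h
  have h' := apply_eq h p
  by_cases hpq : p = q
  · subst hpq
    simp only [eps_apply, if_pos rfl] at h'
    have h2 : ((-eps n p) p : ℝ) = -1 := by simp [eps_apply]
    rw [h2] at h'
    norm_num at h'
  · have h2 : ((-eps n q) p : ℝ) = 0 := by simp [eps_apply, hpq]
    simp only [eps_apply, if_pos rfl] at h'
    rw [h2] at h'
    norm_num at h' 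

open scoped Classical in
lemma exists_data {g} (hg : g ∈ signedPerm n) : ∃ π ε, IsData g π ε := by
  choose q hq using hg
  refine ⟨q, fun p => if g (eps n p) = eps n (q p) then 1 else -1, fun p => ?_, fun p => ?_⟩
  · by_cases h : g (eps n p) = eps n (q p)
    · exact Or.inl (by simp [h])
    · exact Or.inr (by simp [h])
  · show g (eps n p) = (if g (eps n p) = eps n (q p) then (1:ℝ) else -1) • eps n (q p)
    by_cases h : g (eps n p) = eps n (q p)
    · rw [if_pos h, one_smul]; exact h
    · have h2 : g (eps n p) = -eps n (q p) := (hq p).resolve_left h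
      rw [if_neg h, neg_smul, one_smul]; exact h2

lemma IsData.inj {g : EuclideanSpace ℝ (Fin n) ≃ₗᵢ[ℝ] EuclideanSpace ℝ (Fin n)}
    {π : Fin n → Fin n} {ε : Fin n → ℝ} (hd : IsData g π ε) : Function.Injective π := by
  intro p p' h
  have h1 := hd.2 p
  have h2 := hd.2 p'
  rw [h] at h1
  have hsq : ε p' * ε p' = 1 := by rcases hd.1 p' with h' | h' <;> rw [h'] <;> norm_num
  have key : g (eps n p) = (ε p * ε p') • g (eps n p') := by
    rw [h2, smul_smul, mul_assoc, hsq, mul_one, h1]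
  have h3 : eps n p = (ε p * ε p') • eps n p' := by
    apply g.injective
    rw [map_smul]
    exact key
  rcases hd.1 p with ha | ha <;> rcases hd.1 p' with hb | hb <;>
    rw [ha, hb] at h3 <;> norm_num at h3
  · exact eps_eq_iff.1 h3
  · exact absurd h3 (eps_ne_neg p p')
  · exact absurd h3 (eps_ne_neg p p')
  · exact eps_eq_iff.1 h3

lemma IsData.apply {g : EuclideanSpace ℝ (Fin n) ≃ₗᵢ[ℝ] EuclideanSpace ℝ (Fin n)}
    {π : Fin n → Fin n} {ε : Fin n → ℝ} (hd : IsData g π ε) (x : EuclideanSpace ℝ (Fin n)) :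
    g x = ∑ p, (ε p * x p) • eps n (π p) := by
  conv_lhs => rw [eps_decomp x]
  rw [map_sum]
  refine Finset.sum_congr rfl fun p _ => ?_
  rw [map_smul, hd.2 p, smul_smul, mul_comm]

lemma IsData.maps_rootsC {g : EuclideanSpace ℝ (Fin n) ≃ₗᵢ[ℝ] EuclideanSpace ℝ (Fin n)}
    {π : Fin n → Fin n} {ε : Fin n → ℝ} (hd : IsData g π ε) {β} (hβ : β ∈ rootsC n) :
    g β ∈ rootsC n := by
  have main : ∀ γ ∈ posC n, g γ ∈ rootsC n := by
    rintro γ (⟨p, rfl⟩ | ⟨p, q, hpq, rfl | rfl⟩)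
    · rw [map_smul, hd.2 p, smul_smul]
      rcases hd.1 p with h | h <;> rw [h]
      · exact Or.inl (by norm_num; exact two_smul_mem_posC _)
      · refine Or.inr ?_
        have : -((2 * (-1:ℝ)) • eps n (π p)) = (2:ℝ) • eps n (π p) := by module
        rw [this]
        exact two_smul_mem_posC _
    · rw [map_add, hd.2 p, hd.2 q]
      exact pair_mem_rootsC (fun h => absurd (hd.inj h) hpq.ne) (hd.1 p) (hd.1 q)
    · rw [map_sub, hd.2 p, hd.2 q, sub_eq_add_neg, ← neg_smul]
      exact pair_mem_rootsC (fun h => absurd (hd.inj h) hpq.ne) (hd.1 p)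
        (by rcases hd.1 q with h | h <;> rw [h] <;> norm_num)
  rcases hβ with h | h
  · exact main β h
  · have := main _ h
    rw [map_neg] at this
    have := neg_mem_rootsC this
    rwa [neg_neg] at this

lemma signedPerm_mul {g h} (hg : g ∈ signedPerm n) (hh : h ∈ signedPerm n) :
    g * h ∈ signedPerm n := by
  intro p
  have hmul : (g * h) (eps n p) = g (h (eps n p)) := rfl
  obtain ⟨q, hq⟩ := hh p
  obtain ⟨r, hr⟩ := hg q
  refine ⟨r, ?_⟩
  rcases hq with hq | hq <;> rcases hr with hr | hr <;> rw [hmul, hq] <;>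
    simp only [map_neg, hr, neg_neg] <;> tauto

/-! ### Prefix sums -/

/-- The prefix-sum functional. -/
def Pref (n : ℕ) (j : ℕ) (x : EuclideanSpace ℝ (Fin n)) : ℝ :=
  ∑ r ∈ Finset.univ.filter (fun r : Fin n => (r : ℕ) < j), x r

lemma Pref_add (j : ℕ) (x y : EuclideanSpace ℝ (Fin n)) :
    Pref n j (x + y) = Pref n j x + Pref n j y := by
  simp only [Pref, ← Finset.sum_add_distrib]
  rfl

lemma Pref_sub (j : ℕ) (x y : EuclideanSpace ℝ (Fin n)) :
    Pref n j (x - y) = Pref n j x - Pref n j y := by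
  simp only [Pref, ← Finset.sum_sub_distrib]
  rfl

lemma Pref_smul (j : ℕ) (c : ℝ) (x : EuclideanSpace ℝ (Fin n)) :
    Pref n j (c • x) = c * Pref n j x := by
  simp only [Pref, Finset.mul_sum]
  rfl

lemma Pref_sum {ι : Type*} (j : ℕ) (s : Finset ι) (f : ι → EuclideanSpace ℝ (Fin n)) :
    Pref n j (∑ i ∈ s, f i) = ∑ i ∈ s, Pref n j (f i) := by
  unfold Pref
  have h : ∀ r, (∑ i ∈ s, f i) r = ∑ i ∈ s, f i r := fun r => by rw [WithLp.ofLp_sum, Finset.sum_apply]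
  simp_rw [h]
  exact Finset.sum_comm

lemma Pref_eps (j : ℕ) (s : Fin n) : Pref n j (eps n s) = if (s : ℕ) < j then 1 else 0 := by
  unfold Pref
  simp_rw [eps_apply]
  rw [Finset.sum_ite_eq']
  simp

lemma Pref_nonneg_posC {β} (hβ : β ∈ posC n) (j : ℕ) : 0 ≤ Pref n j β := by
  rcases hβ with ⟨p, rfl⟩ | ⟨p, q, hpq, rfl | rfl⟩
  · rw [Pref_smul, Pref_eps]; split_ifs <;> norm_num
  · rw [Pref_add, Pref_eps, Pref_eps]; split_ifs <;> norm_num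
  · rw [Pref_sub, Pref_eps, Pref_eps]
    have hv : (p : ℕ) < (q : ℕ) := hpq
    by_cases hq : (q : ℕ) < j
    · have hp : (p : ℕ) < j := hv.trans hq
      rw [if_pos hp, if_pos hq]; norm_num
    · by_cases hp : (p : ℕ) < j
      · rw [if_pos hp, if_neg hq]; norm_num
      · rw [if_neg hp, if_neg hq]; norm_num

lemma Pref_g {g : EuclideanSpace ℝ (Fin n) ≃ₗᵢ[ℝ] EuclideanSpace ℝ (Fin n)}
    {π : Fin n → Fin n} {ε : Fin n → ℝ} (hd : IsData g π ε) (j : ℕ) (x : EuclideanSpace ℝ (Fin n)) :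
    Pref n j (g x) = ∑ p ∈ Finset.univ.filter (fun p : Fin n => (π p : ℕ) < j), ε p * x p := by
  rw [hd.apply x, Pref_sum]
  simp_rw [Pref_smul, Pref_eps]
  rw [Finset.sum_filter]
  refine Finset.sum_congr rfl fun p _ => ?_
  split_ifs <;> ring

/-! ### Reflections -/

lemma reflRoot_apply (α v : EuclideanSpace ℝ (Fin n)) :
    reflRoot α v = v - (2 * ⟪α, v⟫ / (‖α‖ ^ 2)) • α := by
  rw [reflRoot, Submodule.reflection_apply, Submodule.starProjection_orthogonal_val,
    Submodule.starProjection_singleton]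
  simp only [RCLike.ofReal_real_eq_id, id_eq]
  module

lemma reflRoot_neg (α : EuclideanSpace ℝ (Fin n)) : reflRoot (-α) = reflRoot α := by
  unfold reflRoot
  congr 1
  rw [show ({-α} : Set (EuclideanSpace ℝ (Fin n))) = -{α} by simp, Submodule.span_neg]

lemma inner_eps_left (p : Fin n) (v : EuclideanSpace ℝ (Fin n)) : ⟪eps n p, v⟫ = v p := by
  rw [inner_apply']
  simp_rw [eps_apply, ite_mul, one_mul, zero_mul]
  rw [Finset.sum_ite_eq']
  simp

lemma inner_eps_right (p : Fin n) (v : EuclideanSpace ℝ (Fin n)) : ⟪v, eps n p⟫ = v p := by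
  rw [real_inner_comm, inner_eps_left]


/-! ### Reflections are signed permutations -/

lemma smul_eps_apply (c : ℝ) (p r : Fin n) : (c • eps n p) r = c * eps n p r := rfl

lemma inner_pair_eps {p q : Fin n} (b : ℝ) (r : Fin n) :
    ⟪eps n p + b • eps n q, eps n r⟫ = (if p = r then 1 else 0) + b * (if q = r then 1 else 0) := by
  rw [inner_add_left, real_inner_smul_left, inner_eps_left, inner_eps_left, eps_apply, eps_apply]

lemma norm_sq_pair {p q : Fin n} (hpq : p ≠ q) {b : ℝ} (hb : b = 1 ∨ b = -1) :
    ‖eps n p + b • eps n q‖ ^ 2 = 2 := by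
  rw [← real_inner_self_eq_norm_sq, inner_add_right, real_inner_smul_right,
    inner_pair_eps, inner_pair_eps]
  rcases hb with rfl | rfl <;> simp [hpq, Ne.symm hpq] <;> norm_num

lemma reflRoot_pair_apply {p q : Fin n} (hpq : p ≠ q) {b : ℝ} (hb : b = 1 ∨ b = -1) (r : Fin n) :
    reflRoot (eps n p + b • eps n q) (eps n r) =
      if r = p then (-b) • eps n q else if r = q then (-b) • eps n p else eps n r := by
  rw [reflRoot_apply, inner_pair_eps, norm_sq_pair hpq hb]
  by_cases hrp : r = p
  · subst hrp
    rw [if_pos rfl, if_pos rfl, if_neg (fun h => hpq h.symm)]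
    rcases hb with rfl | rfl <;> · norm_num; try module
  · by_cases hrq : r = q
    · subst hrq
      rw [if_neg hrp, if_pos rfl, if_neg (fun h : p = r => hrp h.symm), if_pos rfl]
      rcases hb with rfl | rfl <;> · norm_num; try module
    · rw [if_neg hrp, if_neg hrq, if_neg (fun h : p = r => hrp h.symm),
        if_neg (fun h : q = r => hrq h.symm)]
      norm_num

lemma inner_two_eps (p r : Fin n) :
    ⟪(2:ℝ) • eps n p, eps n r⟫ = 2 * (if p = r then 1 else 0) := by
  rw [real_inner_smul_left, inner_eps_left, eps_apply]

lemma norm_sq_two (p : Fin n) : ‖(2:ℝ) • eps n p‖ ^ 2 = 4 := by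
  rw [← real_inner_self_eq_norm_sq, real_inner_smul_right, inner_two_eps]
  simp
  norm_num

lemma reflRoot_two_apply (p r : Fin n) :
    reflRoot ((2:ℝ) • eps n p) (eps n r) = if r = p then -eps n p else eps n r := by
  rw [reflRoot_apply, inner_two_eps, norm_sq_two]
  by_cases hrp : r = p
  · subst hrp
    rw [if_pos rfl, if_pos rfl]
    norm_num
    module
  · rw [if_neg hrp, if_neg (fun h : p = r => hrp h.symm)]
    norm_num

lemma reflRoot_mem_signedPerm {α} (hα : α ∈ rootsC n) : reflRoot α ∈ signedPerm n := by
  have main : ∀ β ∈ posC n, reflRoot β ∈ signedPerm n := by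
    rintro β (⟨p, rfl⟩ | ⟨p, q, hpq, rfl | rfl⟩) r
    · rw [reflRoot_two_apply]
      by_cases hrp : r = p
      · exact ⟨p, Or.inr (by rw [if_pos hrp])⟩
      · exact ⟨r, Or.inl (by rw [if_neg hrp])⟩
    · have hb : (1:ℝ) = 1 ∨ (1:ℝ) = -1 := Or.inl rfl
      have h1 : eps n p + eps n q = eps n p + (1:ℝ) • eps n q := by rw [one_smul]
      rw [h1, reflRoot_pair_apply hpq.ne hb]
      by_cases hrp : r = p
      · exact ⟨q, Or.inr (by rw [if_pos hrp]; module)⟩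
      · by_cases hrq : r = q
        · exact ⟨p, Or.inr (by rw [if_neg hrp, if_pos hrq]; module)⟩
        · exact ⟨r, Or.inl (by rw [if_neg hrp, if_neg hrq])⟩
    · have hb : (-1:ℝ) = 1 ∨ (-1:ℝ) = -1 := Or.inr rfl
      have h1 : eps n p - eps n q = eps n p + (-1:ℝ) • eps n q := by module
      rw [h1, reflRoot_pair_apply hpq.ne hb]
      by_cases hrp : r = p
      · exact ⟨q, Or.inl (by rw [if_pos hrp]; module)⟩
      · by_cases hrq : r = q
        · exact ⟨p, Or.inl (by rw [if_neg hrp, if_pos hrq]; module)⟩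
        · exact ⟨r, Or.inl (by rw [if_neg hrp, if_neg hrq])⟩
  rcases hα with h | h
  · exact main α h
  · rw [← reflRoot_neg]
    exact main (-α) h


/-! ### The key step lemma: going up in length means the root image is positive -/

def rvec (n : ℕ) : EuclideanSpace ℝ (Fin n) := WithLp.toLp 2 (fun r => (n : ℝ) - ((r : ℕ) : ℝ))

lemma rvec_apply (r : Fin n) : rvec n r = (n : ℝ) - ((r : ℕ) : ℝ) := rfl

lemma inner_rvec (α : EuclideanSpace ℝ (Fin n)) : ⟪α, rvec n⟫ = Fpos α := by
  rw [inner_apply', Fpos]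
  refine Finset.sum_congr rfl fun r _ => ?_
  rw [rvec_apply]
  ring

lemma invSet_finite (w : EuclideanSpace ℝ (Fin n) ≃ₗᵢ[ℝ] EuclideanSpace ℝ (Fin n)) :
    (invSet (posC n) w).Finite :=
  posC_finite.subset fun _ h => h.1

lemma reflRoot_invol (α v : EuclideanSpace ℝ (Fin n)) : reflRoot α (reflRoot α v) = v :=
  Submodule.reflection_reflection _ v

open scoped Classical in
lemma step_pos {x : EuclideanSpace ℝ (Fin n) ≃ₗᵢ[ℝ] EuclideanSpace ℝ (Fin n)}
    {π : Fin n → Fin n} {ε : Fin n → ℝ} (hd : IsData x π ε) {α} (hα : α ∈ posC n)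
    (hlen : invLen (posC n) x < invLen (posC n) (x * reflRoot α)) : x α ∈ posC n := by
  by_contra hneg
  have hroots : x α ∈ rootsC n := hd.maps_rootsC (Or.inl hα)
  have hxneg : -(x α) ∈ posC n := hroots.resolve_left hneg
  obtain ⟨πs, εs, hds⟩ := exists_data (reflRoot_mem_signedPerm (Or.inl hα))
  set s := reflRoot α with hs
  have hmul : ∀ v, (x * s) v = x (s v) := fun v => rfl
  -- the injection from the inversion set of `x * s` into that of `x`
  set f : EuclideanSpace ℝ (Fin n) → EuclideanSpace ℝ (Fin n) :=
    fun β => if s β ∈ posC n then s β else β with hf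
  have hmaps : ∀ β ∈ invSet (posC n) (x * s), f β ∈ invSet (posC n) x := by
    rintro β ⟨hβpos, hβinv⟩
    rw [hmul] at hβinv
    by_cases hsb : s β ∈ posC n
    · rw [hf]
      simp only [if_pos hsb]
      exact ⟨hsb, hβinv⟩
    · rw [hf]
      simp only [if_neg hsb]
      refine ⟨hβpos, ?_⟩
      have hsroots : s β ∈ rootsC n := hds.maps_rootsC (Or.inl hβpos)
      have hγ : -(s β) ∈ posC n := hsroots.resolve_left hsb
      have hsb_eq : s β = β - (2 * ⟪α, β⟫ / ‖α‖ ^ 2) • α := reflRoot_apply α β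
      set c := 2 * ⟪α, β⟫ / ‖α‖ ^ 2 with hc
      have hFα := Fpos_pos hα
      have hFβ := Fpos_pos hβpos
      have hFγ := Fpos_pos hγ
      have h1 : Fpos (s β) = Fpos β - c * Fpos α := by rw [hsb_eq, Fpos_sub, Fpos_smul]
      have h2 : Fpos (-(s β)) = - Fpos (s β) := Fpos_neg _
      have hcpos : 0 < c := by nlinarith
      have hβ_eq : β = s β + c • α := by rw [hsb_eq]; abel
      have hxβ : -(x β) = -(x (s β)) + c • (-(x α)) := by
        conv_lhs => rw [hβ_eq]
        rw [map_add, map_smul]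
        module
      have hxγ : -(x (s β)) ∈ posC n := hβinv
      have hF : 0 < Fpos (-(x β)) := by
        rw [hxβ, Fpos_add, Fpos_smul]
        have := Fpos_pos hxγ
        have := Fpos_pos hxneg
        nlinarith
      exact mem_posC_of_rootsC (neg_mem_rootsC (hd.maps_rootsC (Or.inl hβpos))) hF
  have hinj : Set.InjOn f (invSet (posC n) (x * s)) := by
    rintro β1 ⟨hβ1, -⟩ β2 ⟨hβ2, -⟩ heq
    rw [hf] at heq
    by_cases h1 : s β1 ∈ posC n <;> by_cases h2 : s β2 ∈ posC n
    · simp only [if_pos h1, if_pos h2] at heq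
      exact s.injective heq
    · simp only [if_pos h1, if_neg h2] at heq
      exfalso
      apply h2
      rw [← heq, reflRoot_invol]
      exact hβ1
    · simp only [if_neg h1, if_pos h2] at heq
      exfalso
      apply h1
      rw [heq, reflRoot_invol]
      exact hβ2
    · simpa only [if_neg h1, if_neg h2] using heq
  have hle : invLen (posC n) (x * s) ≤ invLen (posC n) x :=
    Set.ncard_le_ncard_of_injOn f hmaps hinj (invSet_finite x)
  omega

/-! ### Monotonicity of prefix sums along Bruhat chains -/

lemma bruhat_mono {x y : EuclideanSpace ℝ (Fin n) ≃ₗᵢ[ℝ] EuclideanSpace ℝ (Fin n)}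
    (hx : x ∈ signedPerm n) (hxy : bruhatLE (rootsC n) (posC n) x y) :
    y ∈ signedPerm n ∧ ∀ j : ℕ, Pref n j (y (rvec n)) ≤ Pref n j (x (rvec n)) := by
  induction hxy with
  | refl => exact ⟨hx, fun j => le_refl _⟩
  | @tail b cc hab hbc ih =>
    obtain ⟨⟨α, hα, rfl⟩, hlen⟩ := hbc
    obtain ⟨hb, hpref⟩ := ih
    obtain ⟨β, hβpos, hββ⟩ : ∃ β, β ∈ posC n ∧ reflRoot α = reflRoot β := by
      rcases hα with h | h
      · exact ⟨α, h, rfl⟩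
      · exact ⟨-α, h, (reflRoot_neg α).symm⟩
    rw [hββ] at hlen ⊢
    obtain ⟨πb, εb, hdb⟩ := exists_data hb
    have hstep : b β ∈ posC n := step_pos hdb hβpos hlen
    refine ⟨signedPerm_mul hb (reflRoot_mem_signedPerm (Or.inl hβpos)), fun j => ?_⟩
    have hc : (b * reflRoot β) (rvec n) = b (rvec n) - (2 * ⟪β, rvec n⟫ / ‖β‖ ^ 2) • (b β) := by
      show b (reflRoot β (rvec n)) = _
      rw [reflRoot_apply, map_sub, map_smul]
    rw [hc, Pref_sub, Pref_smul]
    have h1 : 0 ≤ Pref n j (b β) := Pref_nonneg_posC hstep j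
    have h2 : 0 ≤ 2 * ⟪β, rvec n⟫ / ‖β‖ ^ 2 := by
      apply div_nonneg
      · rw [inner_rvec]
        have := Fpos_pos hβpos
        linarith
      · positivity
    have h3 := hpref j
    nlinarith


/-! ### The combinatorial core -/

lemma exu_card {k : ℕ} {P : Fin k → Prop} [DecidablePred P] (h : ∃! i, P i) :
    (Finset.univ.filter P).card = 1 := by
  obtain ⟨i0, hi0, huniq⟩ := h
  rw [Finset.card_eq_one]
  refine ⟨i0, ?_⟩
  ext j
  simp only [Finset.mem_filter, Finset.mem_univ, true_and, Finset.mem_singleton]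
  exact ⟨fun hj => huniq j hj, fun hj => hj ▸ hi0⟩

open scoped Classical in
lemma core {k : ℕ} (π : Fin k → Fin n → Fin n) (ε : Fin k → Fin n → ℝ) (v : Fin n → ℝ)
    (hπ : ∀ i, Function.Injective (π i))
    (hε : ∀ i p, ε i p = 1 ∨ ε i p = -1) :
    ∀ L : Finset (Fin n),
    (∀ j : ℕ, 0 ≤ ∑ p ∈ L.filter (fun p : Fin n => (p : ℕ) < j), v p) →
    (∀ i, ∀ j : ℕ, 0 ≤ ∑ p ∈ L.filter (fun p => ((π i p : Fin n) : ℕ) < j), ε i p * v p) →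
    (∀ p ∈ L, ∃! i, ε i p = -1) →
    (∀ p ∈ L, ∀ q ∈ L, p < q →
      ∃! i, (((π i p : Fin n) : ℕ) < ((π i q : Fin n) : ℕ) ∧ ε i p = -1) ∨
            (((π i q : Fin n) : ℕ) < ((π i p : Fin n) : ℕ) ∧ ε i q = 1)) →
    (∀ p ∈ L, ∀ q ∈ L, p < q →
      ∃! i, (((π i p : Fin n) : ℕ) < ((π i q : Fin n) : ℕ) ∧ ε i p = -1) ∨
            (((π i q : Fin n) : ℕ) < ((π i p : Fin n) : ℕ) ∧ ε i q = -1)) →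
    ∀ p ∈ L, v p = 0 := by
  intro L
  induction L using Finset.strongInduction with
  | H L IH =>
    intro hv hw h2 hminus hplus p hp
    have hne : L.Nonempty := ⟨p, hp⟩
    set m := L.min' hne with hm
    have hmL : m ∈ L := L.min'_mem hne
    have hmin : ∀ q ∈ L, m ≤ q := fun q hq => L.min'_le q hq
    -- Step A : 0 ≤ v m
    have hvm_nonneg : 0 ≤ v m := by
      have hA := hv ((m : ℕ) + 1)
      have hfil : L.filter (fun p : Fin n => (p : ℕ) < (m : ℕ) + 1) = {m} := by
        ext q
        simp only [Finset.mem_filter, Finset.mem_singleton]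
        constructor
        · rintro ⟨hqL, hlt⟩
          exact Fin.le_antisymm (Fin.le_def.mpr (by omega)) (hmin q hqL)
        · rintro rfl
          exact ⟨hmL, by omega⟩
      rwa [hfil, Finset.sum_singleton] at hA
    -- Step B : the quantities T i and their nonnegativity
    set T : Fin k → ℝ := fun i =>
      (∑ p ∈ L.filter (fun p => ((π i p : Fin n) : ℕ) < ((π i m : Fin n) : ℕ)), ε i p * v p) +
      (if ε i m = -1 then -(v m) else 0) with hT
    have hT_nonneg : ∀ i, 0 ≤ T i := by
      intro i
      rcases hε i m with hεm | hεm
      · rw [hT]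
        simp only [hεm]
        norm_num
        exact hw i ((π i m : Fin n) : ℕ)
      · have hfil : L.filter (fun p => ((π i p : Fin n) : ℕ) < ((π i m : Fin n) : ℕ) + 1) =
            insert m (L.filter (fun p => ((π i p : Fin n) : ℕ) < ((π i m : Fin n) : ℕ))) := by
          ext q
          simp only [Finset.mem_filter, Finset.mem_insert]
          constructor
          · rintro ⟨hqL, hlt⟩
            by_cases hqm : q = m
            · exact Or.inl hqm
            · refine Or.inr ⟨hqL, ?_⟩
              have : π i q ≠ π i m := fun h => hqm (hπ i h)
              have : ((π i q : Fin n) : ℕ) ≠ ((π i m : Fin n) : ℕ) := fun h => this (Fin.ext h)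
              omega
          · rintro (rfl | ⟨hqL, hlt⟩)
            · exact ⟨hmL, by omega⟩
            · exact ⟨hqL, by omega⟩
        have hB := hw i (((π i m : Fin n) : ℕ) + 1)
        rw [hfil, Finset.sum_insert (by simp)] at hB
        rw [hT]
        simp only [hεm] at hB ⊢
        norm_num at hB ⊢
        linarith
    -- Step C : ∑ i, T i = -(v m)
    have hsumT : ∑ i, T i = -(v m) := by
      rw [hT]
      rw [Finset.sum_add_distrib]
      have hpart2 : (∑ i, if ε i m = -1 then -(v m) else 0) = -(v m) := by
        rw [← Finset.sum_filter, Finset.sum_const, exu_card (h2 m hmL), one_smul]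
      have hpart1 : (∑ i, ∑ p ∈ L.filter (fun p => ((π i p : Fin n) : ℕ) < ((π i m : Fin n) : ℕ)),
          ε i p * v p) = 0 := by
        have hrw : ∀ i, (∑ p ∈ L.filter (fun p => ((π i p : Fin n) : ℕ) < ((π i m : Fin n) : ℕ)),
            ε i p * v p) = ∑ p ∈ L, if ((π i p : Fin n) : ℕ) < ((π i m : Fin n) : ℕ)
              then ε i p * v p else 0 := fun i => Finset.sum_filter _ _
        simp_rw [hrw]
        rw [Finset.sum_comm]
        refine Finset.sum_eq_zero fun q hqL => ?_
        by_cases hqm : q = m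
        · subst hqm
          refine Finset.sum_eq_zero fun i _ => ?_
          rw [if_neg (by omega)]
        · have hmq : m < q := lt_of_le_of_ne (hmin q hqL) (fun h => hqm h.symm)
          -- counting argument
          have hkey : ∀ i, (if ((π i q : Fin n) : ℕ) < ((π i m : Fin n) : ℕ) then ε i q * v q else 0) =
              ((if (((π i m : Fin n) : ℕ) < ((π i q : Fin n) : ℕ) ∧ ε i m = -1) ∨
                  (((π i q : Fin n) : ℕ) < ((π i m : Fin n) : ℕ) ∧ ε i q = 1) then (1:ℝ) else 0)
               - (if (((π i m : Fin n) : ℕ) < ((π i q : Fin n) : ℕ) ∧ ε i m = -1) ∨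
                  (((π i q : Fin n) : ℕ) < ((π i m : Fin n) : ℕ) ∧ ε i q = -1) then (1:ℝ) else 0)) * v q := by
            intro i
            have hneq : ((π i q : Fin n) : ℕ) ≠ ((π i m : Fin n) : ℕ) :=
              fun h => hqm (hπ i (Fin.ext h))
            set C1 : Prop := (((π i m : Fin n) : ℕ) < ((π i q : Fin n) : ℕ) ∧ ε i m = -1) ∨
                (((π i q : Fin n) : ℕ) < ((π i m : Fin n) : ℕ) ∧ ε i q = 1) with hC1def
            set C2 : Prop := (((π i m : Fin n) : ℕ) < ((π i q : Fin n) : ℕ) ∧ ε i m = -1) ∨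
                (((π i q : Fin n) : ℕ) < ((π i m : Fin n) : ℕ) ∧ ε i q = -1) with hC2def
            by_cases hlt : ((π i q : Fin n) : ℕ) < ((π i m : Fin n) : ℕ)
            · have hnlt : ¬ (((π i m : Fin n) : ℕ) < ((π i q : Fin n) : ℕ)) := by omega
              rcases hε i q with hq1 | hq1
              · have c1 : C1 := Or.inr ⟨hlt, hq1⟩
                have c2 : ¬ C2 := by
                  rw [hC2def]
                  rintro (⟨h, -⟩ | ⟨-, h⟩)
                  · exact hnlt h
                  · rw [hq1] at h; norm_num at h
                rw [if_pos hlt, if_pos c1, if_neg c2, hq1]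
                ring
              · have c1 : ¬ C1 := by
                  rw [hC1def]
                  rintro (⟨h, -⟩ | ⟨-, h⟩)
                  · exact hnlt h
                  · rw [hq1] at h; norm_num at h
                have c2 : C2 := Or.inr ⟨hlt, hq1⟩
                rw [if_pos hlt, if_neg c1, if_pos c2, hq1]
                ring
            · rw [if_neg hlt]
              by_cases hA : ((π i m : Fin n) : ℕ) < ((π i q : Fin n) : ℕ) ∧ ε i m = -1
              · have c1 : C1 := Or.inl hA
                have c2 : C2 := Or.inl hA
                rw [if_pos c1, if_pos c2]
                ring
              · have c1 : ¬ C1 := by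
                  rw [hC1def]
                  rintro (h | ⟨h, -⟩)
                  · exact hA h
                  · exact hlt h
                have c2 : ¬ C2 := by
                  rw [hC2def]
                  rintro (h | ⟨h, -⟩)
                  · exact hA h
                  · exact hlt h
                rw [if_neg c1, if_neg c2]
                ring
          simp_rw [hkey]
          rw [← Finset.sum_mul]
          rw [Finset.sum_sub_distrib]
          rw [Finset.sum_boole, Finset.sum_boole]
          rw [exu_card (hminus m hmL q hqL hmq), exu_card (hplus m hmL q hqL hmq)]
          ring
      rw [hpart1, hpart2, zero_add]
    -- conclude v m = 0
    have hvm : v m = 0 := by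
      have h0 : 0 ≤ ∑ i, T i := Finset.sum_nonneg fun i _ => hT_nonneg i
      rw [hsumT] at h0
      linarith
    -- induction
    by_cases hpm : p = m
    · rw [hpm]; exact hvm
    · refine IH (L.erase m) (Finset.erase_ssubset hmL) ?_ ?_ ?_ ?_ ?_ p
        (Finset.mem_erase.mpr ⟨hpm, hp⟩)
      · intro j
        rw [Finset.filter_erase, Finset.sum_erase _ hvm]
        exact hv j
      · intro i j
        rw [Finset.filter_erase, Finset.sum_erase _ (by rw [hvm, mul_zero])]
        exact hw i j
      · exact fun p hp => h2 p (Finset.mem_of_mem_erase hp)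
      · exact fun p hp q hq hpq =>
          hminus p (Finset.mem_of_mem_erase hp) q (Finset.mem_of_mem_erase hq) hpq
      · exact fun p hp q hq hpq =>
          hplus p (Finset.mem_of_mem_erase hp) q (Finset.mem_of_mem_erase hq) hpq


/-! ### The base vector inequality -/

lemma rvec_pos (p : Fin n) : 0 < rvec n p := by
  rw [rvec_apply]
  have := fin_lt p
  linarith

lemma base_pref {u : EuclideanSpace ℝ (Fin n) ≃ₗᵢ[ℝ] EuclideanSpace ℝ (Fin n)}
    {τ : Fin n → Fin n} {t : Fin n → ℝ} (hdu : IsData u τ t) (j : ℕ) :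
    Pref n j (u (rvec n)) ≤ Pref n j (rvec n) := by
  rw [Pref_g hdu]
  set S := Finset.univ.filter (fun p : Fin n => ((τ p : Fin n) : ℕ) < j) with hS
  set I := Finset.univ.filter (fun p : Fin n => (p : ℕ) < j) with hI
  have step1 : ∑ p ∈ S, t p * rvec n p ≤ ∑ p ∈ S, rvec n p := by
    refine Finset.sum_le_sum fun p _ => ?_
    rcases hdu.1 p with h | h <;> rw [h]
    · rw [one_mul]
    · have := rvec_pos p
      nlinarith
  have step2 : ∑ p ∈ S, rvec n p ≤ ∑ p ∈ I, rvec n p := by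
    rw [← Finset.sum_inter_add_sum_sdiff S I (rvec n), ← Finset.sum_inter_add_sum_sdiff I S (rvec n)]
    rw [Finset.inter_comm I S]
    have hdiff : ∑ p ∈ S \ I, rvec n p ≤ ∑ p ∈ I \ S, rvec n p := by
      rcases Finset.eq_empty_or_nonempty (S \ I) with he | ⟨p0, hp0⟩
      · rw [he, Finset.sum_empty]
        exact Finset.sum_nonneg fun p _ => (rvec_pos p).le
      · -- there is p0 ∈ S with (p0 : ℕ) ≥ j, hence j < n
        have hjn : j < n := by
          have h1 := Finset.mem_sdiff.1 hp0
          have h2 : ¬ ((p0 : ℕ) < j) := by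
            have := h1.2
            simp only [hI, Finset.mem_filter, Finset.mem_univ, true_and] at this
            exact this
          have := p0.isLt
          omega
        have hcard : (S \ I).card ≤ (I \ S).card := by
          have hSI : S.card ≤ I.card := by
            apply Finset.card_le_card_of_injOn (fun p => τ p)
            · intro p hp
              rw [hS, Finset.mem_coe, Finset.mem_filter] at hp
              rw [hI, Finset.mem_coe, Finset.mem_filter]
              exact ⟨Finset.mem_univ _, hp.2⟩
            · intro a _ b _ hab
              exact hdu.inj hab
          have e1 : (S \ I).card + (S ∩ I).card = S.card := Finset.card_sdiff_add_card_inter S I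
          have e2 : (I \ S).card + (I ∩ S).card = I.card := Finset.card_sdiff_add_card_inter I S
          rw [Finset.inter_comm I S] at e2
          omega
        have hub : ∀ p ∈ S \ I, rvec n p ≤ (n : ℝ) - j := by
          intro p hp
          have h1 := Finset.mem_sdiff.1 hp
          have h2 : ¬ ((p : ℕ) < j) := by
            have := h1.2
            simp only [hI, Finset.mem_filter, Finset.mem_univ, true_and] at this
            exact this
          rw [rvec_apply]
          have : (j : ℝ) ≤ ((p : ℕ) : ℝ) := by exact_mod_cast Nat.le_of_not_lt h2
          linarith
        have hlb : ∀ p ∈ I \ S, (n : ℝ) - j ≤ rvec n p := by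
          intro p hp
          have h1 := Finset.mem_sdiff.1 hp
          have h2 : (p : ℕ) < j := by
            have := h1.1
            rw [hI, Finset.mem_filter] at this
            exact this.2
          rw [rvec_apply]
          have : ((p : ℕ) : ℝ) < (j : ℝ) := by exact_mod_cast h2
          linarith
        calc ∑ p ∈ S \ I, rvec n p ≤ (S \ I).card • ((n : ℝ) - j) :=
              Finset.sum_le_card_nsmul _ _ _ hub
          _ ≤ (I \ S).card • ((n : ℝ) - j) := by
              rw [nsmul_eq_mul, nsmul_eq_mul]
              have hnj : (0 : ℝ) ≤ (n : ℝ) - j := by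
                have : (j : ℝ) ≤ (n : ℝ) := by exact_mod_cast hjn.le
                linarith
              have : ((S \ I).card : ℝ) ≤ ((I \ S).card : ℝ) := by exact_mod_cast hcard
              nlinarith
          _ ≤ ∑ p ∈ I \ S, rvec n p := Finset.card_nsmul_le_sum _ _ _ hlb
    linarith
  calc ∑ p ∈ S, t p * rvec n p ≤ ∑ p ∈ S, rvec n p := step1
    _ ≤ ∑ p ∈ I, rvec n p := step2
    _ = Pref n j (rvec n) := rfl

/-! ### Translating inversion-set membership -/

lemma inv_two_iff {g : EuclideanSpace ℝ (Fin n) ≃ₗᵢ[ℝ] EuclideanSpace ℝ (Fin n)}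
    {π : Fin n → Fin n} {ε : Fin n → ℝ} (hd : IsData g π ε) (p : Fin n) :
    (2:ℝ) • eps n p ∈ invSet (posC n) g ↔ ε p = -1 := by
  have hs : -(ε p) = 1 ∨ -(ε p) = -1 := by rcases hd.1 p with h | h <;> rw [h] <;> norm_num
  have himg : -(g ((2:ℝ) • eps n p)) = (2 * (-(ε p))) • eps n (π p) := by
    rw [map_smul, hd.2 p]; module
  constructor
  · rintro ⟨-, hmem⟩
    rw [himg] at hmem
    have := (twosmul_mem_posC_iff hs).1 hmem
    linarith
  · intro h
    refine ⟨two_smul_mem_posC p, ?_⟩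
    rw [himg]
    exact (twosmul_mem_posC_iff hs).2 (by rw [h]; norm_num)

lemma inv_sub_iff {g : EuclideanSpace ℝ (Fin n) ≃ₗᵢ[ℝ] EuclideanSpace ℝ (Fin n)}
    {π : Fin n → Fin n} {ε : Fin n → ℝ} (hd : IsData g π ε) {p q : Fin n} (hpq : p < q) :
    eps n p - eps n q ∈ invSet (posC n) g ↔
      (((π p : Fin n) : ℕ) < ((π q : Fin n) : ℕ) ∧ ε p = -1) ∨
      (((π q : Fin n) : ℕ) < ((π p : Fin n) : ℕ) ∧ ε q = 1) := by
  have hne : π p ≠ π q := fun h => absurd (hd.inj h) hpq.ne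
  have ha : -(ε p) = 1 ∨ -(ε p) = -1 := by rcases hd.1 p with h | h <;> rw [h] <;> norm_num
  have himg : -(g (eps n p - eps n q)) = (-(ε p)) • eps n (π p) + (ε q) • eps n (π q) := by
    rw [map_sub, hd.2 p, hd.2 q]; module
  have hiff := pair_mem_posC_iff hne ha (hd.1 q)
  constructor
  · rintro ⟨-, hmem⟩
    rw [himg] at hmem
    rcases hiff.1 hmem with ⟨hlt, h1⟩ | ⟨hlt, h1⟩
    · exact Or.inl ⟨Fin.lt_def.1 hlt, by linarith⟩
    · exact Or.inr ⟨Fin.lt_def.1 hlt, h1⟩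
  · rintro (⟨hlt, h1⟩ | ⟨hlt, h1⟩)
    · refine ⟨sub_mem_posC hpq, ?_⟩
      rw [himg]
      exact hiff.2 (Or.inl ⟨Fin.lt_def.2 hlt, by rw [h1]; norm_num⟩)
    · refine ⟨sub_mem_posC hpq, ?_⟩
      rw [himg]
      exact hiff.2 (Or.inr ⟨Fin.lt_def.2 hlt, h1⟩)

lemma inv_add_iff {g : EuclideanSpace ℝ (Fin n) ≃ₗᵢ[ℝ] EuclideanSpace ℝ (Fin n)}
    {π : Fin n → Fin n} {ε : Fin n → ℝ} (hd : IsData g π ε) {p q : Fin n} (hpq : p < q) :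
    eps n p + eps n q ∈ invSet (posC n) g ↔
      (((π p : Fin n) : ℕ) < ((π q : Fin n) : ℕ) ∧ ε p = -1) ∨
      (((π q : Fin n) : ℕ) < ((π p : Fin n) : ℕ) ∧ ε q = -1) := by
  have hne : π p ≠ π q := fun h => absurd (hd.inj h) hpq.ne
  have ha : -(ε p) = 1 ∨ -(ε p) = -1 := by rcases hd.1 p with h | h <;> rw [h] <;> norm_num
  have hb : -(ε q) = 1 ∨ -(ε q) = -1 := by rcases hd.1 q with h | h <;> rw [h] <;> norm_num
  have himg : -(g (eps n p + eps n q)) = (-(ε p)) • eps n (π p) + (-(ε q)) • eps n (π q) := by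
    rw [map_add, hd.2 p, hd.2 q]; module
  have hiff := pair_mem_posC_iff hne ha hb
  constructor
  · rintro ⟨-, hmem⟩
    rw [himg] at hmem
    rcases hiff.1 hmem with ⟨hlt, h1⟩ | ⟨hlt, h1⟩
    · exact Or.inl ⟨Fin.lt_def.1 hlt, by linarith⟩
    · exact Or.inr ⟨Fin.lt_def.1 hlt, by linarith⟩
  · rintro (⟨hlt, h1⟩ | ⟨hlt, h1⟩)
    · refine ⟨add_mem_posC hpq, ?_⟩
      rw [himg]
      exact hiff.2 (Or.inl ⟨Fin.lt_def.2 hlt, by rw [h1]; norm_num⟩)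
    · refine ⟨add_mem_posC hpq, ?_⟩
      rw [himg]
      exact hiff.2 (Or.inr ⟨Fin.lt_def.2 hlt, by rw [h1]; norm_num⟩)

end St2

/-- In type `C_n` (`n ≥ 2`), if `Δ⁺ = Φ_{w_1} ⊔ ⋯ ⊔ Φ_{w_k}` and `u ∈ W`
satisfies `w_i ≤ w_i u` in the Bruhat order for all `i`, then `u = e`. -/
theorem statement2 (n : ℕ) (hn : 2 ≤ n) (k : ℕ)
    (w : Fin k → (EuclideanSpace ℝ (Fin n) ≃ₗᵢ[ℝ] EuclideanSpace ℝ (Fin n)))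
    (hw : ∀ i, w i ∈ signedPerm n)
    (hcover : posC n = ⋃ i, invSet (posC n) (w i))
    (hdisj : ∀ i j, i ≠ j → Disjoint (invSet (posC n) (w i)) (invSet (posC n) (w j)))
    (u : EuclideanSpace ℝ (Fin n) ≃ₗᵢ[ℝ] EuclideanSpace ℝ (Fin n))
    (hu : u ∈ signedPerm n)
    (hle : ∀ i, bruhatLE (rootsC n) (posC n) (w i) (w i * u)) :
    u = 1 := by
  classical
  have hdata : ∀ i, ∃ π ε, St2.IsData (w i) π ε := fun i => St2.exists_data (hw i)
  choose πw εw hdw using hdata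
  obtain ⟨τ, t, hdu⟩ := St2.exists_data hu
  -- each positive root is inverted by exactly one w i
  have exu : ∀ β ∈ posC n, ∃! i, β ∈ invSet (posC n) (w i) := by
    intro β hβ
    have hβ' : β ∈ ⋃ i, invSet (posC n) (w i) := by rw [← hcover]; exact hβ
    obtain ⟨i, hi⟩ := Set.mem_iUnion.1 hβ'
    refine ⟨i, hi, fun j hj => ?_⟩
    by_contra hne
    exact Set.disjoint_left.1 (hdisj j i hne) hj hi
  set v : Fin n → ℝ := fun p => (St2.rvec n - u (St2.rvec n)) p with hvdef
  have hcore := St2.core πw εw v (fun i => (hdw i).inj) (fun i p => (hdw i).1 p)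
    Finset.univ ?_ ?_ ?_ ?_ ?_
  · -- conclude u = 1 from v ≡ 0
    have hzero : ∀ p, v p = 0 := fun p => hcore p (Finset.mem_univ p)
    have hfix : u (St2.rvec n) = St2.rvec n := by
      ext r
      have h' : St2.rvec n r - (u (St2.rvec n)) r = 0 := hzero r
      linarith
    have hcoord : ∀ p0, (u (St2.rvec n)) (τ p0) = t p0 * St2.rvec n p0 := by
      intro p0
      have e1 : u (St2.rvec n) = ∑ p, (t p * St2.rvec n p) • eps n (τ p) := hdu.apply _
      rw [e1, WithLp.ofLp_sum, Finset.sum_apply]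
      refine (Finset.sum_eq_single p0 (fun b _ hb => ?_)
        (fun h => absurd (Finset.mem_univ p0) h)).trans ?_
      · rw [St2.smul_eps_apply, St2.eps_apply, if_neg (fun h => hb ((hdu.inj h).symm)), mul_zero]
      · rw [St2.smul_eps_apply, St2.eps_apply, if_pos rfl, mul_one]
    have hfixP : ∀ p0, τ p0 = p0 ∧ t p0 = 1 := by
      intro p0
      have h1 : St2.rvec n (τ p0) = t p0 * St2.rvec n p0 := by rw [← hcoord p0, hfix]
      have h2 := St2.rvec_pos (τ p0)
      have h3 := St2.rvec_pos p0
      have ht : t p0 = 1 := by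
        rcases hdu.1 p0 with h | h
        · exact h
        · exfalso; rw [h] at h1; nlinarith
      refine ⟨?_, ht⟩
      rw [ht, one_mul] at h1
      have hval : ((τ p0 : ℕ) : ℝ) = ((p0 : ℕ) : ℝ) := by
        rw [St2.rvec_apply, St2.rvec_apply] at h1
        linarith
      exact Fin.ext (by exact_mod_cast hval)
    have hueps : ∀ p, u (eps n p) = eps n p := by
      intro p
      rw [hdu.2 p, (hfixP p).1, (hfixP p).2, one_smul]
    refine LinearIsometryEquiv.ext fun x => ?_
    show u x = x
    conv_lhs => rw [St2.eps_decomp x]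
    rw [map_sum]
    simp_rw [map_smul, hueps]
    exact (St2.eps_decomp x).symm
  · -- base prefix positivity
    intro j
    show (0:ℝ) ≤ St2.Pref n j (St2.rvec n - u (St2.rvec n))
    rw [St2.Pref_sub]
    have := St2.base_pref hdu j
    linarith
  · -- prefix positivity for each w i
    intro i j
    show (0:ℝ) ≤ ∑ p ∈ Finset.univ.filter (fun p : Fin n => ((πw i p : Fin n) : ℕ) < j),
      εw i p * ((St2.rvec n - u (St2.rvec n)) p)
    rw [← St2.Pref_g (hdw i), map_sub, St2.Pref_sub]
    have hmono := (St2.bruhat_mono (hw i) (hle i)).2 j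
    have hrw : (w i * u) (St2.rvec n) = w i (u (St2.rvec n)) := rfl
    rw [hrw] at hmono
    linarith
  · -- long roots
    intro p _
    obtain ⟨i, hi, huniq⟩ := exu _ (St2.two_smul_mem_posC p)
    exact ⟨i, (St2.inv_two_iff (hdw i) p).1 hi,
      fun j hj => huniq j ((St2.inv_two_iff (hdw j) p).2 hj)⟩
  · -- roots eps p - eps q
    intro p _ q _ hpq
    obtain ⟨i, hi, huniq⟩ := exu _ (St2.sub_mem_posC hpq)
    exact ⟨i, (St2.inv_sub_iff (hdw i) hpq).1 hi,
      fun j hj => huniq j ((St2.inv_sub_iff (hdw j) hpq).2 hj)⟩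
  · -- roots eps p + eps q
    intro p _ q _ hpq
    obtain ⟨i, hi, huniq⟩ := exu _ (St2.add_mem_posC hpq)
    exact ⟨i, (St2.inv_add_iff (hdw i) hpq).1 hi,
      fun j hj => huniq j ((St2.inv_add_iff (hdw j) hpq).2 hj)⟩


end
end

section
/- Let n ≥ 2 and let W be the Weyl group of type D_n. Suppose w_1, …, w_k ∈ W satisfy Δ⁺ = Φ_{w_1} ⊔ Φ_{w_2} ⊔ ⋯ ⊔ Φ_{w_k} (disjoint union). Then there exists an index i such that either w_i(ε_1) = −ε_p for some p ∈ {1, …, n}, or w_i(ε_1) = ε_n. -/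
open RealInnerProductSpace

noncomputable section

variable {V : Type*} [NormedAddCommGroup V] [InnerProductSpace ℝ V] [FiniteDimensional ℝ V]

namespace S6
variable {n : ℕ}

lemma eps_apply (p q : Fin n) : eps n p q = if q = p then 1 else 0 := by
  simp [eps, EuclideanSpace.single_apply]

lemma eps_ne {p q : Fin n} (h : p ≠ q) : eps n p ≠ eps n q := by
  intro he
  have h2 : eps n p p = eps n q p := congrArg (fun x => x p) he
  rw [eps_apply, eps_apply, if_pos rfl, if_neg (fun hh : p = q => h hh)] at h2
  norm_num at h2

lemma eps_ne_neg (p q : Fin n) : eps n p ≠ -eps n q := by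
  intro he
  have h2 : eps n p p = (-eps n q) p := congrArg (fun x => x p) he
  rw [PiLp.neg_apply] at h2
  simp only [eps_apply, if_pos rfl] at h2
  split_ifs at h2 <;> norm_num at h2

lemma smul_mem_posD_iff {u v : Fin n} (huv : u < v) {s t : ℝ}
    (hs : s = 1 ∨ s = -1) (ht : t = 1 ∨ t = -1) :
    s • eps n u + t • eps n v ∈ posD n ↔ s = 1 := by
  have hne : u ≠ v := ne_of_lt huv
  constructor
  · rintro ⟨p, q, hpq, h | h⟩
    · rcases hs with h1 | h1
      · exact h1
      · exfalso
        subst h1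
        have hu : ((-1 : ℝ) • eps n u + t • eps n v) u = (eps n p + eps n q) u :=
          congrArg (fun x => x u) h
        rw [PiLp.add_apply, PiLp.smul_apply, PiLp.smul_apply, PiLp.add_apply] at hu
        simp [eps_apply, ne_of_lt huv, ne_of_gt huv] at hu
        split_ifs at hu <;> norm_num at hu
    · rcases hs with h1 | h1
      · exact h1
      · exfalso
        subst h1
        have hu : ((-1 : ℝ) • eps n u + t • eps n v) u = (eps n p - eps n q) u :=
          congrArg (fun x => x u) h
        have hv : ((-1 : ℝ) • eps n u + t • eps n v) v = (eps n p - eps n q) v :=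
          congrArg (fun x => x v) h
        rw [PiLp.add_apply, PiLp.smul_apply, PiLp.smul_apply, PiLp.sub_apply] at hu hv
        simp [eps_apply, ne_of_lt huv, ne_of_gt huv] at hu hv
        by_cases huq : u = q
        · subst huq
          by_cases hvp : v = p
          · subst hvp; exact absurd hpq (lt_asymm huv)
          · simp [hvp, ne_of_gt huv] at hv
            rcases ht with h2 | h2 <;> subst h2 <;> norm_num at hv
        · by_cases hup : u = p <;> simp [hup, huq, ne_of_lt hpq] at hu <;> norm_num at hu
  · intro h1
    subst h1
    rcases ht with h2 | h2 <;> subst h2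
    · exact ⟨u, v, huv, Or.inl (by rw [one_smul, one_smul])⟩
    · exact ⟨u, v, huv, Or.inr (by rw [one_smul, neg_one_smul, sub_eq_add_neg])⟩

lemma mem_posD_pair {u v : Fin n} (hne : u ≠ v) {s t : ℝ}
    (hs : s = 1 ∨ s = -1) (ht : t = 1 ∨ t = -1) :
    s • eps n u + t • eps n v ∈ posD n ↔ (u < v ∧ s = 1) ∨ (v < u ∧ t = 1) := by
  rcases lt_or_gt_of_ne hne with h | h
  · rw [smul_mem_posD_iff h hs ht]
    constructor
    · intro h1; exact Or.inl ⟨h, h1⟩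
    · rintro (⟨_, h1⟩ | ⟨h2, _⟩)
      · exact h1
      · exact absurd h2 (lt_asymm h)
  · rw [add_comm, smul_mem_posD_iff h ht hs]
    constructor
    · intro h1; exact Or.inr ⟨h, h1⟩
    · rintro (⟨h2, _⟩ | ⟨_, h1⟩)
      · exact absurd h2 (lt_asymm h)
      · exact h1

lemma phi_pair_mem (w : EuclideanSpace ℝ (Fin n) ≃ₗᵢ[ℝ] EuclideanSpace ℝ (Fin n))
    {p q bp bq : Fin n} (hpq : p < q) (hbne : bp ≠ bq) {sp sq : ℝ}
    (hsp : sp = 1 ∨ sp = -1) (hsq : sq = 1 ∨ sq = -1)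
    (hp : w (eps n p) = sp • eps n bp) (hq : w (eps n q) = sq • eps n bq) :
    ((eps n p + eps n q ∈ invSet (posD n) w) ↔ ((bp < bq ∧ sp = -1) ∨ (bq < bp ∧ sq = -1)))
    ∧ ((eps n p - eps n q ∈ invSet (posD n) w) ↔ ((bp < bq ∧ sp = -1) ∨ (bq < bp ∧ sq = 1))) := by
  have hroot1 : eps n p + eps n q ∈ posD n := ⟨p, q, hpq, Or.inl rfl⟩
  have hroot2 : eps n p - eps n q ∈ posD n := ⟨p, q, hpq, Or.inr rfl⟩
  have hsp' : -sp = 1 ∨ -sp = -1 := by rcases hsp with h | h <;> subst h <;> norm_num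
  have hsq' : -sq = 1 ∨ -sq = -1 := by rcases hsq with h | h <;> subst h <;> norm_num
  have hneg : (sp = -1) ↔ (-sp = 1) := by constructor <;> intro h <;> linarith
  have hneg' : (sq = -1) ↔ (-sq = 1) := by constructor <;> intro h <;> linarith
  have e1 : -(w (eps n p + eps n q)) = (-sp) • eps n bp + (-sq) • eps n bq := by
    rw [map_add, hp, hq]; module
  have e2 : -(w (eps n p - eps n q)) = (-sp) • eps n bp + sq • eps n bq := by
    rw [map_sub, hp, hq]; module
  have A1 : (eps n p + eps n q ∈ invSet (posD n) w) ↔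
      ((bp < bq ∧ -sp = 1) ∨ (bq < bp ∧ -sq = 1)) := by
    rw [← mem_posD_pair hbne hsp' hsq', ← e1]
    exact ⟨fun h => h.2, fun h => ⟨hroot1, h⟩⟩
  have A2 : (eps n p - eps n q ∈ invSet (posD n) w) ↔
      ((bp < bq ∧ -sp = 1) ∨ (bq < bp ∧ sq = 1)) := by
    rw [← mem_posD_pair hbne hsp' hsq, ← e2]
    exact ⟨fun h => h.2, fun h => ⟨hroot2, h⟩⟩
  constructor
  · rw [A1, hneg, hneg']
  · rw [A2, hneg]

end S6

/-- In type `D_n` (`n ≥ 2`), if `Δ⁺ = Φ_{w_1} ⊔ ⋯ ⊔ Φ_{w_k}` then there is an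
index `i` with `w_i(ε_1) = -ε_p` for some `p`, or `w_i(ε_1) = ε_n`. -/
theorem statement6 (n : ℕ) (hn : 2 ≤ n) (k : ℕ)
    (w : Fin k → (EuclideanSpace ℝ (Fin n) ≃ₗᵢ[ℝ] EuclideanSpace ℝ (Fin n)))
    (hw : ∀ i, w i ∈ evenSignedPerm n)
    (hcover : posD n = ⋃ i, invSet (posD n) (w i))
    (hdisj : ∀ i j, i ≠ j → Disjoint (invSet (posD n) (w i)) (invSet (posD n) (w j))) :
    ∃ i, (∃ p : Fin n, (w i) (eps n ⟨0, by omega⟩) = -eps n p) ∨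
      (w i) (eps n ⟨0, by omega⟩) = eps n ⟨n - 1, by omega⟩ := by
  classical
  by_contra hcon
  push_neg at hcon
  have h0 : (0 : ℕ) < n := by omega
  have h1 : (1 : ℕ) < n := by omega
  have hn1 : n - 1 < n := by omega
  set z : Fin n := ⟨0, h0⟩ with hzdef
  set o : Fin n := ⟨1, h1⟩ with hodef
  set lf : Fin n := ⟨n - 1, hn1⟩ with hlfdef
  choose b hb using fun i => (hw i).1
  have binj : ∀ i, Function.Injective (b i) := by
    intro i p q hbe
    by_contra hne
    have hwp := hb i p
    have hwq := hb i q
    rw [hbe] at hwp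
    rcases hwp with hA | hA <;> rcases hwq with hB | hB
    · exact S6.eps_ne hne ((w i).injective (hA.trans hB.symm))
    · refine S6.eps_ne_neg p q ((w i).injective ?_)
      rw [hA, map_neg, hB, neg_neg]
    · refine S6.eps_ne_neg q p ((w i).injective ?_).symm
      rw [map_neg, hA, neg_neg, hB]
    · exact S6.eps_ne hne ((w i).injective (hA.trans hB.symm))
  have hbz : ∀ i, w i (eps n z) = eps n (b i z) := by
    intro i
    rcases hb i z with h | h
    · exact h
    · exact absurd h ((hcon i).1 (b i z))
  have hbzs : ∀ i, w i (eps n z) = (1 : ℝ) • eps n (b i z) := fun i => by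
    rw [one_smul]; exact hbz i
  have hbzl : ∀ i, b i z ≠ lf := by
    intro i h
    exact (hcon i).2 ((hbz i).trans (congrArg (eps n) h))
  have hsgn : ∀ i p, ∃ s : ℝ, (s = 1 ∨ s = -1) ∧ w i (eps n p) = s • eps n (b i p) := by
    intro i p
    rcases hb i p with h | h
    · exact ⟨1, Or.inl rfl, by rw [one_smul]; exact h⟩
    · exact ⟨-1, Or.inr rfl, by rw [neg_one_smul]; exact h⟩
  have hmem : ∀ v ∈ posD n, ∃ i, v ∈ invSet (posD n) (w i) := by
    intro v hv
    rw [hcover] at hv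
    exact Set.mem_iUnion.mp hv
  have hdisj' : ∀ {i j : Fin k} (v : EuclideanSpace ℝ (Fin n)), i ≠ j →
      v ∈ invSet (posD n) (w i) → v ∈ invSet (posD n) (w j) → False := by
    intro i j v hij hvi hvj
    exact Set.disjoint_left.mp (hdisj i j hij) hvi hvj
  have hzo : z < o := by
    rw [Fin.lt_def]; exact Nat.zero_lt_one
  obtain ⟨i, hi⟩ := hmem (eps n z + eps n o) ⟨z, o, hzo, Or.inl rfl⟩
  obtain ⟨so, hso, hwo⟩ := hsgn i o
  have hbzo : b i z ≠ b i o := fun h => (ne_of_lt hzo) (binj i h)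
  have hchar := S6.phi_pair_mem (w i) hzo hbzo (Or.inl rfl) hso (hbzs i) hwo
  have hio' : b i o < b i z ∧ so = -1 := by
    rcases hchar.1.mp hi with ⟨_, h⟩ | h
    · norm_num at h
    · exact h
  have key : ∀ y : Fin n, y ≠ z → b i y < b i z := by
    intro y hyz
    by_cases hyo : y = o
    · rw [hyo]; exact hio'.1
    by_contra hylt
    have hy0 : (y : ℕ) ≠ 0 := fun h => hyz (Fin.ext h)
    have hy1 : (y : ℕ) ≠ 1 := fun h => hyo (Fin.ext h)
    have hzv : (z : ℕ) = 0 := rfl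
    have hov : (o : ℕ) = 1 := rfl
    have hzy : z < y := by rw [Fin.lt_def]; omega
    have hoy : o < y := by rw [Fin.lt_def]; omega
    have hbne2 : b i y ≠ b i z := fun h => hyz (binj i h)
    have hziy : b i z < b i y := lt_of_le_of_ne (not_lt.mp hylt) (Ne.symm hbne2)
    obtain ⟨sy, hsy, hwy⟩ := hsgn i y
    have hboy : b i o ≠ b i y := fun h => (ne_of_lt hoy) (binj i h)
    have hOY := S6.phi_pair_mem (w i) hoy hboy hso hsy hwo hwy
    have hoylt : b i o < b i y := lt_trans hio'.1 hziy
    have hplus : eps n o + eps n y ∈ invSet (posD n) (w i) :=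
      hOY.1.mpr (Or.inl ⟨hoylt, hio'.2⟩)
    have hminus : eps n o - eps n y ∈ invSet (posD n) (w i) :=
      hOY.2.mpr (Or.inl ⟨hoylt, hio'.2⟩)
    obtain ⟨j, hj⟩ := hmem (eps n z + eps n y) ⟨z, y, hzy, Or.inl rfl⟩
    obtain ⟨ty, hty, hwjy⟩ := hsgn j y
    have hbzyj : b j z ≠ b j y := fun h => (ne_of_lt hzy) (binj j h)
    have hZYj := S6.phi_pair_mem (w j) hzy hbzyj (Or.inl rfl) hty (hbzs j) hwjy
    have hjy : b j y < b j z ∧ ty = -1 := by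
      rcases hZYj.1.mp hj with ⟨_, h⟩ | h
      · norm_num at h
      · exact h
    have hij : i ≠ j := by
      rintro rfl
      exact hylt hjy.1
    obtain ⟨tjo, htjo, hwjo⟩ := hsgn j o
    have hbozj : b j o ≠ b j z := fun h => (ne_of_lt hzo) (binj j h).symm
    rcases lt_or_gt_of_ne hbozj with hjoz | hjzo
    · have hZOj := S6.phi_pair_mem (w j) hzo (Ne.symm hbozj) (Or.inl rfl) htjo (hbzs j) hwjo
      rcases htjo with h2 | h2
      · have hjm : eps n z - eps n o ∈ invSet (posD n) (w j) :=
          hZOj.2.mpr (Or.inr ⟨hjoz, h2⟩)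
        obtain ⟨j2, hj2⟩ := hmem (eps n z - eps n y) ⟨z, y, hzy, Or.inr rfl⟩
        obtain ⟨uy, huy, hwj2y⟩ := hsgn j2 y
        have hbzyj2 : b j2 z ≠ b j2 y := fun h => (ne_of_lt hzy) (binj j2 h)
        have hZYj2 := S6.phi_pair_mem (w j2) hzy hbzyj2 (Or.inl rfl) huy (hbzs j2) hwj2y
        have hj2y : b j2 y < b j2 z ∧ uy = 1 := by
          rcases hZYj2.2.mp hj2 with ⟨_, h⟩ | h
          · norm_num at h
          · exact h
        have hij2 : i ≠ j2 := by
          rintro rfl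
          exact hylt hj2y.1
        have hjj2 : j ≠ j2 := by
          rintro rfl
          have hcontra := hwjy.symm.trans hwj2y
          rw [hjy.2, hj2y.2, one_smul, neg_one_smul] at hcontra
          exact S6.eps_ne_neg _ _ hcontra.symm
        obtain ⟨ujo, hujo, hwj2o⟩ := hsgn j2 o
        have hbozj2 : b j2 o ≠ b j2 z := fun h => (ne_of_lt hzo) (binj j2 h).symm
        rcases lt_or_gt_of_ne hbozj2 with hA | hA
        · have hZOj2 := S6.phi_pair_mem (w j2) hzo (Ne.symm hbozj2) (Or.inl rfl) hujo
            (hbzs j2) hwj2o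
          rcases hujo with h3 | h3
          · exact hdisj' _ hjj2 hjm (hZOj2.2.mpr (Or.inr ⟨hA, h3⟩))
          · exact hdisj' _ hij2 hi (hZOj2.1.mpr (Or.inr ⟨hA, h3⟩))
        · have hboyj2 : b j2 o ≠ b j2 y := fun h => (ne_of_lt hoy) (binj j2 h)
          have hOYj2 := S6.phi_pair_mem (w j2) hoy hboyj2 hujo huy hwj2o hwj2y
          exact hdisj' _ hij2 hminus (hOYj2.2.mpr (Or.inr ⟨lt_trans hj2y.1 hA, hj2y.2⟩))
      · exact hdisj' _ hij hi (hZOj.1.mpr (Or.inr ⟨hjoz, h2⟩))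
    · have hboyj : b j o ≠ b j y := fun h => (ne_of_lt hoy) (binj j h)
      have hOYj := S6.phi_pair_mem (w j) hoy hboyj htjo hty hwjo hwjy
      exact hdisj' _ hij hplus (hOYj.1.mpr (Or.inr ⟨lt_trans hjy.1 hjzo, hjy.2⟩))
  obtain ⟨y, hy⟩ := (Finite.injective_iff_surjective.mp (binj i)) lf
  by_cases hyz : y = z
  · rw [hyz] at hy
    exact hbzl i hy
  · have h5 := key y hyz
    have h6 : (b i z : ℕ) < n := (b i z).isLt
    have h7 : (b i y : ℕ) = n - 1 := by rw [hy]
    have h8 : (b i z : ℕ) ≠ n - 1 := fun h => hbzl i (Fin.ext h)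
    rw [Fin.lt_def] at h5
    omega


end
end
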